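/- arXiv:1607.00702 — 7 statements merged into one kernel-verified Lean document; each statement's English description precedes it below -/
import Mathlib

section
/- The partition 𝒫 is regular-sparse with respect to A if and only if there exists a decomposition A = Σ_{k=1}^K ψ_k ψ_kᵀ such that on every patch P_m its local dimension equals the local rank, i.e. d_m = #{k : ψ_k|_{P_m} ≠ 0} = K_m = rank(A_mm) for all m = 1, ..., M. -/
open Matrix BigOperators

/-- Restriction of a vector `ψ ∈ ℝ^N` to the indices in a patch `Pm`. -/
def restrictPatch {N : ℕ} (Pm : Finset (Fin N)) (ψ : Fin N → ℝ) : ↥Pm → ℝ :=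
  fun i => ψ i

/-- Patch-wise sparseness `s(ψ;𝒫)`: the number of patches on which `ψ` is nonzero. -/
noncomputable def sparseness {N M : ℕ} (P : Fin M → Finset (Fin N)) (ψ : Fin N → ℝ) : ℕ :=
  {m : Fin M | restrictPatch (P m) ψ ≠ 0}.ncard

/-- `P` is a partition of `{1,...,N}` into disjoint nonempty patches. -/
def IsPartition {N M : ℕ} (P : Fin M → Finset (Fin N)) : Prop :=
  (∀ m, (P m).Nonempty) ∧ (∀ m m', m ≠ m' → Disjoint (P m) (P m')) ∧ (∀ i, ∃ m, i ∈ P m)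

/-- `K_m`: the rank of the principal submatrix `A_mm`. -/
noncomputable def patchRank {N : ℕ} (A : Matrix (Fin N) (Fin N) ℝ) (Pm : Finset (Fin N)) : ℕ :=
  (A.submatrix (fun i : ↥Pm => (i : Fin N)) (fun i : ↥Pm => (i : Fin N))).rank

/-- The partition `P` is regular-sparse w.r.t. `A`. -/
def RegularSparse {N M : ℕ} (K : ℕ) (A : Matrix (Fin N) (Fin N) ℝ)
    (P : Fin M → Finset (Fin N)) : Prop :=
  ∃ g : Fin K → Fin N → ℝ,
    A = ∑ k, vecMulVec (g k) (g k) ∧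
    ∀ m, LinearIndependent ℝ
      (fun k : {k : Fin K // restrictPatch (P m) (g k) ≠ 0} =>
        restrictPatch (P m) (g (k : Fin K)))

/-- `(ψ_1,...,ψ_K)` is a set of intrinsic sparse modes of `A` w.r.t. the partition `P`. -/
def IsISM {N M K : ℕ} (A : Matrix (Fin N) (Fin N) ℝ) (P : Fin M → Finset (Fin N))
    (ψ : Fin K → Fin N → ℝ) : Prop :=
  A = ∑ k, vecMulVec (ψ k) (ψ k) ∧
  ∀ φ : Fin K → Fin N → ℝ, A = ∑ k, vecMulVec (φ k) (φ k) →
    ∑ k, sparseness P (ψ k) ≤ ∑ k, sparseness P (φ k)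

/-- Two modes are unidentifiable on partition `P`: supported on exactly the same patches. -/
def Unidentifiable {N M : ℕ} (P : Fin M → Finset (Fin N)) (g g' : Fin N → ℝ) : Prop :=
  ∀ m, restrictPatch (P m) g ≠ 0 ↔ restrictPatch (P m) g' ≠ 0

/-- The block diagonal matrix `H_ext = diag(H_1, ..., H_M)`. -/
def Hext {N M : ℕ} (P : Fin M → Finset (Fin N)) (Km : Fin M → ℕ)
    (H : ∀ m, Matrix ↥(P m) (Fin (Km m)) ℝ) :
    Matrix (Fin N) ((m : Fin M) × Fin (Km m)) ℝ :=
  Matrix.of fun i c => if h : i ∈ P c.1 then H c.1 ⟨i, h⟩ c.2 else 0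

/-- The `(m,n)` block `Λ_mn` of a matrix indexed by `Σ m, Fin (Km m)`. -/
def ΛBlock {M : ℕ} {Km : Fin M → ℕ}
    (Λ : Matrix ((m : Fin M) × Fin (Km m)) ((m : Fin M) × Fin (Km m)) ℝ) (m n : Fin M) :
    Matrix (Fin (Km m)) (Fin (Km n)) ℝ :=
  Matrix.of fun i j => Λ ⟨m, i⟩ ⟨n, j⟩

/-- Joint diagonalization objective: sum of squares of off-diagonal entries of `Vᵀ S_n V`. -/
noncomputable def offDiagObj {n M : ℕ} (S : Fin M → Matrix (Fin n) (Fin n) ℝ)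
    (V : Matrix (Fin n) (Fin n) ℝ) : ℝ :=
  ∑ p, ∑ i, ∑ j, if i ≠ j then ((Vᵀ * S p * V) i j) ^ 2 else 0

/-- Rank of a sum of rank-one matrices `v_k v_kᵀ` equals the dimension of the span of the
`v_k`. -/
lemma rank_sum_vecMulVec' {ι : Type*} [Fintype ι] [DecidableEq ι] {K : ℕ}
    (v : Fin K → ι → ℝ) :
    (∑ k, vecMulVec (v k) (v k)).rank
      = Module.finrank ℝ (Submodule.span ℝ (Set.range v)) := by
  have h : (∑ k, vecMulVec (v k) (v k)) = (Matrix.of v)ᵀ * (Matrix.of v) := by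
    ext i j
    simp [Matrix.sum_apply, Matrix.mul_apply, vecMulVec_apply, mul_comm]
  rw [h, Matrix.rank_transpose_mul_self, Matrix.rank_eq_finrank_span_row]
  rfl

lemma span_range_nonzero {ι : Type*} {K : ℕ} (v : Fin K → ι → ℝ) :
    Submodule.span ℝ (Set.range fun k : {k : Fin K // v k ≠ 0} => v (k : Fin K))
      = Submodule.span ℝ (Set.range v) := by
  apply le_antisymm
  · apply Submodule.span_mono
    rintro x ⟨k, rfl⟩
    exact ⟨k, rfl⟩
  · rw [Submodule.span_le]
    rintro x ⟨k, rfl⟩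
    by_cases hk : v k = 0
    · rw [hk]; exact Submodule.zero_mem _
    · exact Submodule.subset_span ⟨⟨k, hk⟩, rfl⟩

/-- For a finite family, the nonzero members are linearly independent iff their number equals
the dimension of the span of the whole family. -/
lemma li_nonzero_iff_ncard_eq_finrank {ι : Type*} {K : ℕ} (v : Fin K → ι → ℝ) :
    LinearIndependent ℝ (fun k : {k : Fin K // v k ≠ 0} => v (k : Fin K)) ↔
      {k : Fin K | v k ≠ 0}.ncard
        = Module.finrank ℝ (Submodule.span ℝ (Set.range v)) := by
  classical
  haveI : Fintype {k : Fin K // v k ≠ 0} := Fintype.ofFinite _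
  rw [linearIndependent_iff_card_eq_finrank_span, Set.finrank, span_range_nonzero]
  have hcard : {k : Fin K | v k ≠ 0}.ncard = Fintype.card {k : Fin K // v k ≠ 0} := by
    rw [Set.ncard_eq_toFinset_card', Set.toFinset_card]
    exact Fintype.card_congr (Equiv.refl _)
  rw [hcard]

/-- The patch rank equals the dimension of the span of the restricted modes. -/
lemma patchRank_eq_finrank_span {N K : ℕ} (A : Matrix (Fin N) (Fin N) ℝ)
    (g : Fin K → Fin N → ℝ) (hdec : A = ∑ k, vecMulVec (g k) (g k))
    (Pm : Finset (Fin N)) :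
    patchRank A Pm
      = Module.finrank ℝ
          (Submodule.span ℝ (Set.range fun k => restrictPatch Pm (g k))) := by
  classical
  have hsub : A.submatrix (fun i : ↥Pm => (i : Fin N)) (fun i : ↥Pm => (i : Fin N))
      = ∑ k, vecMulVec (restrictPatch Pm (g k)) (restrictPatch Pm (g k)) := by
    ext i j
    rw [hdec]
    simp [Matrix.sum_apply, vecMulVec_apply, restrictPatch]
  rw [patchRank, hsub, rank_sum_vecMulVec']

/-- The partition `𝒫` is regular-sparse with respect to `A` if and only if
there exists a decomposition `A = Σ_{k=1}^K ψ_k ψ_kᵀ` such that on every patch the local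
dimension `d_m = #{k : ψ_k|_{P_m} ≠ 0}` equals the local rank `K_m = rank(A_mm)`. -/
theorem regularSparse_iff_exists_decomposition_localDim_eq_patchRank
    {N M K : ℕ} (A : Matrix (Fin N) (Fin N) ℝ)
    (hA : A.PosSemidef) (hrank : A.rank = K)
    (P : Fin M → Finset (Fin N)) (hP : IsPartition P) :
    RegularSparse K A P ↔
      ∃ ψ : Fin K → Fin N → ℝ,
        A = ∑ k, vecMulVec (ψ k) (ψ k) ∧
        ∀ m, {k : Fin K | restrictPatch (P m) (ψ k) ≠ 0}.ncard = patchRank A (P m) := by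
  constructor
  · rintro ⟨g, hdec, hli⟩
    refine ⟨g, hdec, fun m => ?_⟩
    rw [patchRank_eq_finrank_span A g hdec (P m)]
    exact (li_nonzero_iff_ncard_eq_finrank (fun k => restrictPatch (P m) (g k))).mp (hli m)
  · rintro ⟨ψ, hdec, hcard⟩
    refine ⟨ψ, hdec, fun m => ?_⟩
    refine (li_nonzero_iff_ncard_eq_finrank (fun k => restrictPatch (P m) (ψ k))).mpr ?_
    rw [← patchRank_eq_finrank_span A ψ hdec (P m)]
    exact hcard m
end

section
/- The partition 𝒫 is regular-sparse with respect to A if and only if the minimum of the total patch-wise sparseness Σ_{k=1}^K s(ψ_k;𝒫) over all decompositions A = Σ_{k=1}^K ψ_k ψ_kᵀ equals Σ_{m=1}^M K_m, where K_m = rank(A_mm). -/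
open Matrix BigOperators

section AuxISM

open Submodule Set

variable {ι : Type*} [Fintype ι] [DecidableEq ι]

private lemma aux_sum_vecMulVec_eq {K : ℕ} (v : Fin K → ι → ℝ) :
    (∑ k, vecMulVec (v k) (v k)) =
      (Matrix.of fun i k => v k i) * (Matrix.of fun i k => v k i)ᵀ := by
  ext i j
  simp [Matrix.mul_apply, Matrix.sum_apply, vecMulVec_apply]

private lemma aux_rank_sum_vecMulVec {K : ℕ} (v : Fin K → ι → ℝ) :
    (∑ k, vecMulVec (v k) (v k)).rank =
      Module.finrank ℝ (Submodule.span ℝ (Set.range v)) := by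
  rw [aux_sum_vecMulVec_eq, Matrix.rank_self_mul_transpose,
    Matrix.rank_eq_finrank_span_cols]
  congr 2

private lemma aux_span_range_eq_span_nonzero {K : ℕ} (v : Fin K → ι → ℝ) :
    Submodule.span ℝ (Set.range v) =
      Submodule.span ℝ (Set.range fun k : {k : Fin K // v k ≠ 0} => v k) := by
  apply le_antisymm
  · rw [Submodule.span_le]
    rintro _ ⟨k, rfl⟩
    by_cases h : v k = 0
    · simp [h]
    · exact Submodule.subset_span ⟨⟨k, h⟩, rfl⟩
  · rw [Submodule.span_le]
    rintro _ ⟨k, rfl⟩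
    exact Submodule.subset_span ⟨k, rfl⟩

private lemma aux_ncard_eq_card {K : ℕ} (v : Fin K → ι → ℝ)
    [Fintype {k : Fin K // v k ≠ 0}] :
    {k : Fin K | v k ≠ 0}.ncard = Fintype.card {k : Fin K // v k ≠ 0} := by
  rw [← Nat.card_coe_set_eq, Nat.card_eq_fintype_card]
  exact Fintype.card_congr (Equiv.subtypeEquivRight fun _ => Iff.rfl)

private lemma aux_finrank_span_le {K : ℕ} (v : Fin K → ι → ℝ) :
    Module.finrank ℝ (Submodule.span ℝ (Set.range v)) ≤ {k : Fin K | v k ≠ 0}.ncard := by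
  haveI : Fintype {k : Fin K // v k ≠ 0} := Fintype.ofFinite _
  rw [aux_span_range_eq_span_nonzero, aux_ncard_eq_card]
  exact finrank_range_le_card _

private lemma aux_li_iff {K : ℕ} (v : Fin K → ι → ℝ) :
    LinearIndependent ℝ (fun k : {k : Fin K // v k ≠ 0} => v k) ↔
      Module.finrank ℝ (Submodule.span ℝ (Set.range v)) = {k : Fin K | v k ≠ 0}.ncard := by
  haveI : Fintype {k : Fin K // v k ≠ 0} := Fintype.ofFinite _
  rw [linearIndependent_iff_card_eq_finrank_span, aux_ncard_eq_card,
    Set.finrank, aux_span_range_eq_span_nonzero, eq_comm]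

private lemma aux_submatrix_sum {N K : ℕ} (v : Fin K → Fin N → ℝ) (Pm : Finset (Fin N)) :
    ((∑ k, vecMulVec (v k) (v k)).submatrix
        (fun i : ↥Pm => (i : Fin N)) (fun i : ↥Pm => (i : Fin N)))
      = ∑ k, vecMulVec (restrictPatch Pm (v k)) (restrictPatch Pm (v k)) := by
  ext i j
  simp [Matrix.sum_apply, vecMulVec_apply, restrictPatch]

private lemma aux_patchRank_eq {N K : ℕ} {A : Matrix (Fin N) (Fin N) ℝ}
    {v : Fin K → Fin N → ℝ} (hA : A = ∑ k, vecMulVec (v k) (v k)) (Pm : Finset (Fin N)) :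
    patchRank A Pm =
      Module.finrank ℝ (Submodule.span ℝ (Set.range fun k => restrictPatch Pm (v k))) := by
  rw [patchRank, hA, aux_submatrix_sum, aux_rank_sum_vecMulVec]

private lemma aux_total_sparseness {N M K : ℕ} (P : Fin M → Finset (Fin N))
    (ψ : Fin K → Fin N → ℝ) :
    ∑ k, sparseness P (ψ k) =
      ∑ m, {k : Fin K | restrictPatch (P m) (ψ k) ≠ 0}.ncard := by
  classical
  have h1 : ∀ k, sparseness P (ψ k)
      = ∑ m, if restrictPatch (P m) (ψ k) ≠ 0 then 1 else 0 := by
    intro k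
    rw [sparseness, ← Nat.card_coe_set_eq, Nat.card_eq_fintype_card,
      Fintype.card_subtype, Finset.card_filter]
    simp [Set.mem_setOf_eq]
  have h2 : ∀ m, {k : Fin K | restrictPatch (P m) (ψ k) ≠ 0}.ncard
      = ∑ k, if restrictPatch (P m) (ψ k) ≠ 0 then 1 else 0 := by
    intro m
    rw [← Nat.card_coe_set_eq, Nat.card_eq_fintype_card,
      Fintype.card_subtype, Finset.card_filter]
    simp [Set.mem_setOf_eq]
  simp only [h1, h2]
  exact Finset.sum_comm

private lemma aux_lower_bound {N M K : ℕ} (A : Matrix (Fin N) (Fin N) ℝ)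
    (P : Fin M → Finset (Fin N)) {ψ : Fin K → Fin N → ℝ}
    (hψ : A = ∑ k, vecMulVec (ψ k) (ψ k)) :
    ∑ m, patchRank A (P m) ≤ ∑ k, sparseness P (ψ k) := by
  rw [aux_total_sparseness]
  refine Finset.sum_le_sum fun m _ => ?_
  rw [aux_patchRank_eq hψ]
  exact aux_finrank_span_le _

end AuxISM

/-- `𝒫` is regular-sparse with respect to `A` iff the minimum of the total
patch-wise sparseness `Σ_k s(ψ_k;𝒫)` over all decompositions `A = Σ_{k=1}^K ψ_k ψ_kᵀ`
equals `Σ_m K_m` with `K_m = rank(A_mm)`, i.e. iff `Σ_m K_m` is attained and is a lower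
bound for all such totals. -/
theorem regularSparse_iff_min_total_sparseness_eq_sum_patchRank
    {N M K : ℕ} (A : Matrix (Fin N) (Fin N) ℝ)
    (hA : A.PosSemidef) (hrank : A.rank = K)
    (P : Fin M → Finset (Fin N)) (hP : IsPartition P) :
    RegularSparse K A P ↔
      IsLeast {s : ℕ | ∃ ψ : Fin K → Fin N → ℝ,
          A = ∑ k, vecMulVec (ψ k) (ψ k) ∧ s = ∑ k, sparseness P (ψ k)}
        (∑ m, patchRank A (P m)) := by
  constructor
  · rintro ⟨g, hg, hLI⟩
    constructor
    · refine ⟨g, hg, ?_⟩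
      rw [aux_total_sparseness]
      refine Finset.sum_congr rfl fun m _ => ?_
      rw [aux_patchRank_eq hg]
      exact (aux_li_iff _).1 (hLI m)
    · rintro s ⟨ψ, hψ, rfl⟩
      exact aux_lower_bound A P hψ
  · rintro ⟨⟨ψ, hψ, hs⟩, _⟩
    refine ⟨ψ, hψ, fun m => ?_⟩
    have hle : ∀ m ∈ Finset.univ, patchRank A (P m)
        ≤ {k : Fin K | restrictPatch (P m) (ψ k) ≠ 0}.ncard := fun m _ => by
      rw [aux_patchRank_eq hψ]; exact aux_finrank_span_le _
    have hsum : ∑ m, patchRank A (P m)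
        = ∑ m, {k : Fin K | restrictPatch (P m) (ψ k) ≠ 0}.ncard := by
      rw [hs, aux_total_sparseness]
    have heach := (Finset.sum_eq_sum_iff_of_le hle).1 hsum m (Finset.mem_univ m)
    rw [aux_patchRank_eq hψ] at heach
    exact (aux_li_iff _).2 heach
end

section
/- Suppose 𝒫 is regular-sparse with respect to A and let (ψ_1,...,ψ_K) be a set of intrinsic sparse modes of A with indicator matrix L. Then there exists a block-diagonal orthogonal matrix D = diag(D_1,...,D_M), with D_m ∈ O(K_m) for each m, such that Λ = D (L Lᵀ) Dᵀ; in particular, Λ and L Lᵀ have the same eigenvalues with the same multiplicities. -/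
open Matrix BigOperators

section AuxLemmas

variable {n p q : Type*} [Fintype n] [Fintype p] [Fintype q]

omit [Fintype n] in
private lemma aux_mulVec_inj_of_li {H : Matrix n p ℝ}
    (h : LinearIndependent ℝ (fun j : p => fun i => H i j)) {x : p → ℝ}
    (hx : H.mulVec x = 0) : x = 0 := by
  have h2 := Fintype.linearIndependent_iff.mp h x
  funext j
  refine h2 ?_ j
  funext i
  have hi := congrFun hx i
  simp only [Matrix.mulVec, dotProduct] at hi
  simpa [Finset.sum_apply, mul_comm] using hi

omit [Fintype n] [Fintype q] in
private lemma aux_cancel_left {H : Matrix n p ℝ}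
    (hinj : ∀ x : p → ℝ, H.mulVec x = 0 → x = 0)
    {X Y : Matrix p q ℝ} (h : H * X = H * Y) : X = Y := by
  have hz : H * (X - Y) = 0 := by rw [Matrix.mul_sub, h, sub_self]
  have hcols : ∀ c, (fun j => (X - Y) j c) = 0 := by
    intro c
    apply hinj
    funext i
    have := congrFun (congrFun hz i) c
    simpa [Matrix.mulVec, dotProduct, Matrix.mul_apply] using this
  have hXY : X - Y = 0 := by
    ext j c
    simpa using congrFun (hcols c) j
  exact sub_eq_zero.mp hXY

omit [Fintype n] [Fintype q] in
private lemma aux_cancel_right {H : Matrix n p ℝ}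
    (hinj : ∀ x : p → ℝ, H.mulVec x = 0 → x = 0)
    {X Y : Matrix q p ℝ} (h : X * Hᵀ = Y * Hᵀ) : X = Y := by
  have h1 := congrArg Matrix.transpose h
  simp only [Matrix.transpose_mul, Matrix.transpose_transpose] at h1
  have h2 := aux_cancel_left hinj h1
  have h3 := congrArg Matrix.transpose h2
  simpa using h3

omit [Fintype n] in
private lemma aux_mul_transpose_self_eq_zero {B : Matrix n p ℝ} (h : B * Bᵀ = 0) : B = 0 := by
  have hB : (Bᵀ)ᴴ = B := by ext i j; simp [Matrix.conjTranspose_apply]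
  have h0 : (Bᵀ)ᴴ * Bᵀ = 0 := by rw [hB, h]
  have h1 := Matrix.conjTranspose_mul_self_eq_zero.mp h0
  have h2 := congrArg Matrix.transpose h1
  simpa using h2

private lemma aux_gram_det_ne_zero {r : ℕ} {H : Matrix n (Fin r) ℝ}
    (h : LinearIndependent ℝ (fun j : Fin r => fun i => H i j)) :
    IsUnit (Hᵀ * H).det := by
  rw [isUnit_iff_ne_zero]
  intro hdet
  obtain ⟨v, hv, hv0⟩ := (Matrix.exists_mulVec_eq_zero_iff).mpr hdet
  apply hv
  apply aux_mulVec_inj_of_li h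
  have hq : (H.mulVec v) ⬝ᵥ (H.mulVec v) = 0 := by
    have h2 : v ⬝ᵥ ((Hᵀ * H).mulVec v) = 0 := by rw [hv0, dotProduct_zero]
    rwa [← Matrix.mulVec_mulVec, Matrix.dotProduct_mulVec, Matrix.vecMul_transpose] at h2
  exact dotProduct_self_eq_zero.mp hq

private lemma aux_charpoly_conj_orth {D X : Matrix n n ℝ} [DecidableEq n]
    (h : D * Dᵀ = 1) : (D * X * Dᵀ).charpoly = X.charpoly := by
  let Cp : ℝ →+* Polynomial ℝ := Polynomial.C
  have hmap : ∀ (A B : Matrix n n ℝ), (A * B).map Cp = A.map Cp * B.map Cp := fun A B =>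
    Matrix.map_mul
  have hDt : (Dᵀ).map Cp = (D.map Cp)ᵀ := by ext i j; simp [Matrix.map_apply]
  have hD1 : D.map Cp * (D.map Cp)ᵀ = 1 := by
    rw [← hDt, ← hmap, h, Matrix.map_one Cp (map_zero Cp) (map_one Cp)]
  have hcm : Matrix.charmatrix (D * X * Dᵀ) =
      D.map Cp * Matrix.charmatrix X * (D.map Cp)ᵀ := by
    unfold Matrix.charmatrix
    rw [Matrix.mul_sub, Matrix.sub_mul]
    congr 1
    · have hc : Matrix.scalar n (Polynomial.X : Polynomial ℝ) * (D.map Cp) =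
          (D.map Cp) * Matrix.scalar n (Polynomial.X : Polynomial ℝ) :=
        (Matrix.scalar_commute _ (fun r' => Commute.all _ _) _).eq
      rw [← hc, Matrix.mul_assoc, hD1, Matrix.mul_one]
    · simp only [RingHom.mapMatrix_apply]
      rw [hmap, hmap, hDt]
  rw [Matrix.charpoly, Matrix.charpoly, hcm, Matrix.det_mul, Matrix.det_mul]
  have hdet1 : (D.map Cp).det * ((D.map Cp)ᵀ).det = 1 := by
    rw [← Matrix.det_mul, hD1, Matrix.det_one]
  calc (D.map Cp).det * (Matrix.charmatrix X).det * ((D.map Cp)ᵀ).det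
      = (Matrix.charmatrix X).det * ((D.map Cp).det * ((D.map Cp)ᵀ).det) := by ring
    _ = (Matrix.charmatrix X).det := by rw [hdet1, mul_one]

private lemma aux_sum_vecMulVec {K : ℕ} {n : Type*} [Fintype n] (f : Fin K → n → ℝ) (i j : n) :
    (∑ k, vecMulVec (f k) (f k)) i j = ∑ k, f k i * f k j := by
  simp [Matrix.sum_apply, Matrix.vecMulVec_apply]

omit [Fintype n] [Fintype p] [Fintype q] in
private lemma aux_sum_subtype {K : ℕ} (p : Fin K → Prop) [DecidablePred p] (f : Fin K → ℝ)
    (h0 : ∀ k, ¬ p k → f k = 0) : ∑ k, f k = ∑ t : {k // p k}, (f t : ℝ) := by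
  rw [← Finset.sum_filter_of_ne (fun x _ hx => by_contra fun hp => hx (h0 x hp))]
  exact Finset.sum_subtype _ (by simp) f

private lemma aux_sparseness_eq {N M : ℕ} (P : Fin M → Finset (Fin N)) (v : Fin N → ℝ) :
    sparseness P v = Nat.card {m : Fin M // restrictPatch (P m) v ≠ 0} := by
  rw [sparseness, ← Nat.card_coe_set_eq]
  rfl

private lemma aux_sum_card {Mn K : ℕ} (p : Fin Mn → Fin K → Prop) [∀ m k, Decidable (p m k)] :
    ∑ k, Fintype.card {m // p m k} = ∑ m, Fintype.card {k // p m k} := by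
  simp only [Fintype.card_subtype, Finset.card_filter]
  exact Finset.sum_comm

private lemma aux_factor {n : Type*} [Fintype n] {r s : ℕ}
    (H : Matrix n (Fin r) ℝ) (Ψ : Matrix n (Fin s) ℝ)
    (hli : LinearIndependent ℝ (fun j : Fin r => fun i => H i j))
    (hfac : Ψ * Ψᵀ = H * Hᵀ) :
    ∃ C : Matrix (Fin r) (Fin s) ℝ, H * C = Ψ ∧ C * Cᵀ = 1 := by
  classical
  have hgram := aux_gram_det_ne_zero hli
  set G := Hᵀ * H with hG
  set Pr := H * G⁻¹ * Hᵀ with hPr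
  have hPrH : Pr * H = H := by
    rw [hPr, Matrix.mul_assoc (H * G⁻¹) Hᵀ H, Matrix.mul_assoc H G⁻¹ (Hᵀ * H), ← hG,
      Matrix.nonsing_inv_mul G hgram, Matrix.mul_one]
  have hGT : Gᵀ = G := by rw [hG, Matrix.transpose_mul, Matrix.transpose_transpose]
  have hPrT : Prᵀ = Pr := by
    rw [hPr, Matrix.transpose_mul, Matrix.transpose_mul, Matrix.transpose_transpose,
      Matrix.transpose_nonsing_inv, hGT, Matrix.mul_assoc]
  have hsym : (Ψ * Ψᵀ)ᵀ = Ψ * Ψᵀ := by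
    rw [Matrix.transpose_mul, Matrix.transpose_transpose]
  have h1 : Pr * (Ψ * Ψᵀ) = Ψ * Ψᵀ := by
    rw [hfac, ← Matrix.mul_assoc, hPrH]
  have h2 : (Ψ * Ψᵀ) * Prᵀ = Ψ * Ψᵀ := by
    calc (Ψ * Ψᵀ) * Prᵀ = ((Ψ * Ψᵀ)ᵀ) * Prᵀ := by rw [hsym]
      _ = (Pr * (Ψ * Ψᵀ))ᵀ := (Matrix.transpose_mul _ _).symm
      _ = Ψ * Ψᵀ := by rw [h1, hsym]
  have e1 : Ψ * (Ψᵀ * Prᵀ) = Ψ * Ψᵀ := by rw [← Matrix.mul_assoc, h2]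
  have e2 : Pr * Ψ * Ψᵀ = Ψ * Ψᵀ := by rw [Matrix.mul_assoc, h1]
  have e3 : Pr * Ψ * (Ψᵀ * Prᵀ) = Ψ * Ψᵀ := by rw [Matrix.mul_assoc, e1, h1]
  have hB : (Ψ - Pr * Ψ) * (Ψ - Pr * Ψ)ᵀ = 0 := by
    rw [Matrix.transpose_sub, Matrix.transpose_mul, Matrix.sub_mul, Matrix.mul_sub,
      Matrix.mul_sub, e1, e2, e3]
    simp
  have hPΨ : Pr * Ψ = Ψ := (sub_eq_zero.mp (aux_mul_transpose_self_eq_zero hB)).symm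
  have hHC : H * (G⁻¹ * Hᵀ * Ψ) = Ψ := by
    calc H * (G⁻¹ * Hᵀ * Ψ) = Pr * Ψ := by
          rw [hPr]; simp only [Matrix.mul_assoc]
      _ = Ψ := hPΨ
  refine ⟨G⁻¹ * Hᵀ * Ψ, hHC, ?_⟩
  have hinj : ∀ x, H.mulVec x = 0 → x = 0 := fun x hx => aux_mulVec_inj_of_li hli hx
  set C := G⁻¹ * Hᵀ * Ψ with hCdef
  have key : (H * (C * Cᵀ)) * Hᵀ = (H * (1 : Matrix (Fin r) (Fin r) ℝ)) * Hᵀ := by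
    rw [Matrix.mul_one]
    have h' : (H * (C * Cᵀ)) * Hᵀ = (H * C) * (H * C)ᵀ := by
      simp only [Matrix.transpose_mul, Matrix.mul_assoc]
    rw [h', hHC, hfac]
  have k2 : H * (C * Cᵀ) = H * (1 : Matrix (Fin r) (Fin r) ℝ) := aux_cancel_right hinj key
  exact aux_cancel_left hinj k2

end AuxLemmas
/-- Suppose `𝒫` is regular-sparse w.r.t. `A` and `(ψ_1,...,ψ_K)` is a set of
intrinsic sparse modes of `A` with indicator matrix `L`. Then there exists a block-diagonal
orthogonal matrix `D = diag(D_1,...,D_M)` such that `Λ = D (L Lᵀ) Dᵀ`; in particular `Λ` and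
`L Lᵀ` have the same eigenvalues with the same multiplicities (equal characteristic
polynomials). -/
theorem lambda_orthogonally_similar_to_LLT
    {N M K : ℕ} (A : Matrix (Fin N) (Fin N) ℝ)
    (hA : A.PosSemidef) (hrank : A.rank = K)
    (P : Fin M → Finset (Fin N)) (hP : IsPartition P)
    (hreg : RegularSparse K A P)
    (ψ : Fin K → Fin N → ℝ) (hism : IsISM A P ψ)
    (Km : Fin M → ℕ) (hKm : ∀ m, Km m = patchRank A (P m))
    (H : ∀ m, Matrix ↥(P m) (Fin (Km m)) ℝ)
    (hHli : ∀ m, LinearIndependent ℝ (fun j : Fin (Km m) => fun i : ↥(P m) => H m i j))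
    (hH : ∀ m, A.submatrix (fun i : ↥(P m) => (i : Fin N)) (fun i : ↥(P m) => (i : Fin N))
      = H m * (H m)ᵀ)
    (Λ : Matrix ((m : Fin M) × Fin (Km m)) ((m : Fin M) × Fin (Km m)) ℝ)
    (hΛ : A = Hext P Km H * Λ * (Hext P Km H)ᵀ)
    (d : Fin M → ℕ)
    (e : ∀ n, Fin (d n) ≃ {k : Fin K // restrictPatch (P n) (ψ k) ≠ 0})
    (L : Matrix ((m : Fin M) × Fin (d m)) (Fin K) ℝ)
    (hL : ∀ (m : Fin M) (i : Fin (d m)) (k : Fin K),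
      L ⟨m, i⟩ k = if ((e m i : Fin K) = k) then 1 else 0) :
    ∃ (hd : ∀ m, d m = Km m)
      (D : Matrix ((m : Fin M) × Fin (Km m)) ((m : Fin M) × Fin (Km m)) ℝ),
      (∀ p q : (m : Fin M) × Fin (Km m), p.1 ≠ q.1 → D p q = 0) ∧
      Dᵀ * D = 1 ∧ D * Dᵀ = 1 ∧
      Λ = D * (Matrix.reindex (Equiv.sigmaCongrRight fun m => finCongr (hd m))
        (Equiv.sigmaCongrRight fun m => finCongr (hd m)) (L * Lᵀ)) * Dᵀ ∧
      Λ.charpoly = (L * Lᵀ).charpoly := by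

  classical
  obtain ⟨hAψ, hmin⟩ := hism
  obtain ⟨g, hAg, hgli⟩ := hreg
  obtain ⟨hne, hdisj, hcover⟩ := hP
  have hAψ' : ∀ i j, A i j = ∑ k, ψ k i * ψ k j := fun i j => by
    rw [hAψ]; exact aux_sum_vecMulVec ψ i j
  have hAg' : ∀ i j, A i j = ∑ k, g k i * g k j := fun i j => by
    rw [hAg]; exact aux_sum_vecMulVec g i j
  -- the matrices of nonzero restrictions of ψ on each patch
  set Ψm : ∀ m : Fin M, Matrix ↥(P m) (Fin (d m)) ℝ :=
    fun m => Matrix.of fun i j => ψ ((e m j : Fin K)) i with hΨmdef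
  have hAmmψ : ∀ m, A.submatrix (fun i : ↥(P m) => (i : Fin N)) (fun i : ↥(P m) => (i : Fin N))
      = Ψm m * (Ψm m)ᵀ := by
    intro m
    ext i j
    rw [Matrix.submatrix_apply, hAψ' i j, Matrix.mul_apply]
    rw [aux_sum_subtype (fun k => restrictPatch (P m) (ψ k) ≠ 0)
      (fun k => ψ k (i : Fin N) * ψ k (j : Fin N)) ?_]
    · rw [← Equiv.sum_comp (e m) (fun t => ψ (t : Fin K) (i : Fin N) * ψ (t : Fin K) (j : Fin N))]
      rfl
    · intro k hk
      have hk0 : restrictPatch (P m) (ψ k) = 0 := not_not.mp hk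
      have h1 : ψ k (i : Fin N) = 0 := congrFun hk0 i
      show ψ k (i : Fin N) * ψ k (j : Fin N) = 0
      rw [h1, zero_mul]
  -- the matrices of nonzero restrictions of g on each patch
  set Gm : ∀ m : Fin M, Matrix ↥(P m) {k : Fin K // restrictPatch (P m) (g k) ≠ 0} ℝ :=
    fun m => Matrix.of fun i t => g (t : Fin K) i with hGmdef
  have hAmmg : ∀ m, A.submatrix (fun i : ↥(P m) => (i : Fin N)) (fun i : ↥(P m) => (i : Fin N))
      = Gm m * (Gm m)ᵀ := by
    intro m
    ext i j
    rw [Matrix.submatrix_apply, hAg' i j, Matrix.mul_apply]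
    rw [aux_sum_subtype (fun k => restrictPatch (P m) (g k) ≠ 0)
      (fun k => g k (i : Fin N) * g k (j : Fin N)) ?_]
    · rfl
    · intro k hk
      have hk0 : restrictPatch (P m) (g k) = 0 := not_not.mp hk
      have h1 : g k (i : Fin N) = 0 := congrFun hk0 i
      show g k (i : Fin N) * g k (j : Fin N) = 0
      rw [h1, zero_mul]
  -- K_m ≤ d_m
  have hKmle : ∀ m, Km m ≤ d m := by
    intro m
    rw [hKm m, patchRank, hAmmψ m, Matrix.rank_self_mul_transpose]
    simpa using Matrix.rank_le_card_width (Ψm m)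
  -- K_m = number of nonzero restrictions of g
  have hKmg : ∀ m, Km m = Fintype.card {k : Fin K // restrictPatch (P m) (g k) ≠ 0} := by
    intro m
    rw [hKm m, patchRank, hAmmg m, Matrix.rank_self_mul_transpose, ← Matrix.rank_transpose]
    exact LinearIndependent.rank_matrix (hgli m)
  -- sparseness sums
  have hsum : ∀ f : Fin K → Fin N → ℝ, ∑ k, sparseness P (f k)
      = ∑ m, Fintype.card {k : Fin K // restrictPatch (P m) (f k) ≠ 0} := by
    intro f
    have h1 : ∀ k, sparseness P (f k)
        = Fintype.card {m : Fin M // restrictPatch (P m) (f k) ≠ 0} := by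
      intro k; rw [aux_sparseness_eq, Nat.card_eq_fintype_card]
    simp_rw [h1]
    exact aux_sum_card (fun m k => restrictPatch (P m) (f k) ≠ 0)
  have hdcard : ∀ m, d m = Fintype.card {k : Fin K // restrictPatch (P m) (ψ k) ≠ 0} := by
    intro m
    have := Fintype.card_congr (e m)
    simpa using this
  -- d_m = K_m
  have hsum_le : ∑ m, d m ≤ ∑ m, Km m := by
    have h1 := hmin g hAg
    rw [hsum ψ, hsum g] at h1
    calc ∑ m, d m = ∑ m, Fintype.card {k : Fin K // restrictPatch (P m) (ψ k) ≠ 0} := by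
          simp_rw [hdcard]
      _ ≤ ∑ m, Fintype.card {k : Fin K // restrictPatch (P m) (g k) ≠ 0} := h1
      _ = ∑ m, Km m := by simp_rw [hKmg]
  have hsum_eq : ∑ m, Km m = ∑ m, d m :=
    le_antisymm (Finset.sum_le_sum fun m _ => hKmle m) hsum_le
  have hd : ∀ m, d m = Km m := by
    intro m
    exact ((Finset.sum_eq_sum_iff_of_le (fun i _ => hKmle i)).mp hsum_eq m
      (Finset.mem_univ m)).symm
  -- factor Ψm through H
  have hΨH : ∀ m, Ψm m * (Ψm m)ᵀ = H m * (H m)ᵀ := fun m => by rw [← hAmmψ m, hH m]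
  choose C hHC hCC using fun m => aux_factor (H m) (Ψm m) (hHli m) (hΨH m)
  -- the block diagonal orthogonal matrix
  set Dm : ∀ m, Matrix (Fin (Km m)) (Fin (Km m)) ℝ :=
    fun m => (C m).submatrix id (⇑(finCongr (hd m)).symm) with hDmdef
  set D := Matrix.blockDiagonal' Dm with hDdef
  have hDm1 : ∀ m, Dm m * (Dm m)ᵀ = 1 := by
    intro m
    show (C m).submatrix id (⇑(finCongr (hd m)).symm) *
        ((C m).submatrix id (⇑(finCongr (hd m)).symm))ᵀ = 1
    rw [Matrix.transpose_submatrix]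
    rw [Matrix.submatrix_mul_equiv (C m) ((C m)ᵀ) id ((finCongr (hd m)).symm) id]
    rw [hCC m, Matrix.submatrix_id_id]
  have hDDT : D * Dᵀ = 1 := by
    rw [hDdef, Matrix.blockDiagonal'_transpose, ← Matrix.blockDiagonal'_mul]
    have h1 : (fun m => Dm m * (Dm m)ᵀ) = (fun m => (1 : Matrix (Fin (Km m)) (Fin (Km m)) ℝ)) :=
      funext hDm1
    rw [h1]
    exact Matrix.blockDiagonal'_one
  have hDTD : Dᵀ * D = 1 := mul_eq_one_comm.mp hDDT
  have hDblock : ∀ p q : (m : Fin M) × Fin (Km m), p.1 ≠ q.1 → D p q = 0 := by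
    rintro ⟨m, i⟩ ⟨n, j⟩ hmn
    exact Matrix.blockDiagonal'_apply_ne Dm i j hmn
  -- reindexed L
  set σ : ((m : Fin M) × Fin (d m)) ≃ ((m : Fin M) × Fin (Km m)) :=
    Equiv.sigmaCongrRight (fun m => finCongr (hd m)) with hσdef
  set Ltil : Matrix ((m : Fin M) × Fin (Km m)) (Fin K) ℝ := L.submatrix (⇑σ.symm) id
    with hLtildef
  -- injectivity of Hext
  have hHextinj : ∀ v : ((m : Fin M) × Fin (Km m)) → ℝ,
      (Hext P Km H).mulVec v = 0 → v = 0 := by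
    intro v hv
    funext p
    obtain ⟨m, j⟩ := p
    have hzero : (H m).mulVec (fun j' => v ⟨m, j'⟩) = 0 := by
      funext i
      have hi := congrFun hv (i : Fin N)
      simp only [Matrix.mulVec, dotProduct, Pi.zero_apply] at hi ⊢
      rw [← Finset.univ_sigma_univ, Finset.sum_sigma] at hi
      rw [Finset.sum_eq_single_of_mem m (Finset.mem_univ m) ?_] at hi
      · rw [← hi]
        apply Finset.sum_congr rfl
        intro j' _
        congr 1
        show H m i j' = if h : (i : Fin N) ∈ P m then H m ⟨(i : Fin N), h⟩ j' else 0
        rw [dif_pos i.2]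
      · intro n _ hn
        apply Finset.sum_eq_zero
        intro j' _
        have h0 : Hext P Km H (i : Fin N) ⟨n, j'⟩ = 0 := by
          show (if h : (i : Fin N) ∈ P n then H n ⟨(i : Fin N), h⟩ j' else 0) = 0
          exact dif_neg fun hin => (Finset.disjoint_left.mp (hdisj n m hn)) hin i.2
        rw [h0, zero_mul]
    have := aux_mulVec_inj_of_li (hHli m) hzero
    exact congrFun this j
  -- the big factorization
  set Ψbig : Matrix (Fin N) (Fin K) ℝ := Matrix.of fun i k => ψ k i with hΨbigdef
  have hAbig : A = Ψbig * Ψbigᵀ := by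
    ext i j
    rw [Matrix.mul_apply, hAψ' i j]
    rfl
  have hfact : Ψbig = Hext P Km H * (D * Ltil) := by
    ext i k
    obtain ⟨m₀, hi⟩ := hcover i
    rw [Matrix.mul_apply]
    rw [← Finset.univ_sigma_univ, Finset.sum_sigma]
    rw [Finset.sum_eq_single_of_mem m₀ (Finset.mem_univ m₀) ?_]
    swap
    · intro n _ hn
      apply Finset.sum_eq_zero
      intro j' _
      have h0 : Hext P Km H i ⟨n, j'⟩ = 0 := by
        show (if h : i ∈ P n then H n ⟨i, h⟩ j' else 0) = 0
        exact dif_neg fun hin => (Finset.disjoint_left.mp (hdisj n m₀ hn)) hin hi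
      rw [h0, zero_mul]
    have hHextapp : ∀ j : Fin (Km m₀), Hext P Km H i ⟨m₀, j⟩ = H m₀ ⟨i, hi⟩ j := by
      intro j
      show (if h : i ∈ P m₀ then H m₀ ⟨i, h⟩ j else 0) = H m₀ ⟨i, hi⟩ j
      rw [dif_pos hi]
    have hDL : ∀ j : Fin (Km m₀), (D * Ltil) ⟨m₀, j⟩ k
        = ∑ j'' : Fin (d m₀), C m₀ j j'' * (if ((e m₀ j'' : Fin K)) = k then 1 else 0) := by
      intro j
      rw [Matrix.mul_apply]
      rw [← Finset.univ_sigma_univ, Finset.sum_sigma]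
      rw [Finset.sum_eq_single_of_mem m₀ (Finset.mem_univ m₀) ?_]
      swap
      · intro n _ hn
        apply Finset.sum_eq_zero
        intro j' _
        have h0 : D ⟨m₀, j⟩ ⟨n, j'⟩ = 0 := Matrix.blockDiagonal'_apply_ne Dm j j' (Ne.symm hn)
        rw [h0, zero_mul]
      rw [← Equiv.sum_comp (finCongr (hd m₀))
        (fun j' => D ⟨m₀, j⟩ ⟨m₀, j'⟩ * Ltil ⟨m₀, j'⟩ k)]
      apply Finset.sum_congr rfl
      intro j'' _
      have hD1 : D ⟨m₀, j⟩ ⟨m₀, finCongr (hd m₀) j''⟩ = C m₀ j j'' := by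
        show Matrix.blockDiagonal' Dm ⟨m₀, j⟩ ⟨m₀, finCongr (hd m₀) j''⟩ = C m₀ j j''
        rw [Matrix.blockDiagonal'_apply_eq]
        show C m₀ j ((finCongr (hd m₀)).symm (finCongr (hd m₀) j'')) = C m₀ j j''
        rw [Equiv.symm_apply_apply]
      have hL1 : Ltil ⟨m₀, finCongr (hd m₀) j''⟩ k
          = (if ((e m₀ j'' : Fin K)) = k then 1 else 0) := by
        show L (σ.symm ⟨m₀, finCongr (hd m₀) j''⟩) k = _
        have hσs : σ.symm ⟨m₀, finCongr (hd m₀) j''⟩ = ⟨m₀, j''⟩ := by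
          apply σ.injective
          rw [Equiv.apply_symm_apply]
          rfl
        rw [hσs, hL]
      show D ⟨m₀, j⟩ ⟨m₀, finCongr (hd m₀) j''⟩ * Ltil ⟨m₀, finCongr (hd m₀) j''⟩ k = _
      rw [hD1, hL1]
    by_cases hk : restrictPatch (P m₀) (ψ k) ≠ 0
    · have hj₀ : True := trivial
      set j₀ : Fin (d m₀) := (e m₀).symm ⟨k, hk⟩ with hj₀def
      have hcond : ∀ j'' : Fin (d m₀), ((e m₀ j'' : Fin K) = k) ↔ j'' = j₀ := fun j'' => by
        rw [hj₀def, Equiv.eq_symm_apply, Subtype.ext_iff]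
      have hsum2 : ∀ j : Fin (Km m₀), (D * Ltil) ⟨m₀, j⟩ k = C m₀ j j₀ := by
        intro j
        rw [hDL j]
        simp only [hcond, mul_ite, mul_one, mul_zero]
        simp [Finset.sum_ite_eq']
      calc Ψbig i k = ψ k i := rfl
        _ = Ψm m₀ ⟨i, hi⟩ j₀ := by
            show ψ k i = ψ ((e m₀ j₀ : Fin K)) i
            rw [hj₀def, Equiv.apply_symm_apply]
        _ = (H m₀ * C m₀) ⟨i, hi⟩ j₀ := by rw [hHC m₀]
        _ = ∑ j, H m₀ ⟨i, hi⟩ j * C m₀ j j₀ := Matrix.mul_apply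
        _ = ∑ j, Hext P Km H i ⟨m₀, j⟩ * (D * Ltil) ⟨m₀, j⟩ k := by
            apply Finset.sum_congr rfl
            intro j _
            rw [hHextapp j, hsum2 j]
    · have hk0 : restrictPatch (P m₀) (ψ k) = 0 := not_not.mp hk
      have hzero2 : ∀ j : Fin (Km m₀), (D * Ltil) ⟨m₀, j⟩ k = 0 := by
        intro j
        rw [hDL j]
        apply Finset.sum_eq_zero
        intro j'' _
        have hne2 : ((e m₀ j'' : Fin K)) ≠ k := fun hek =>
          (e m₀ j'').2 (by rw [hek]; exact hk0)
        rw [if_neg hne2, mul_zero]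
      rw [show Ψbig i k = (0 : ℝ) from congrFun hk0 ⟨i, hi⟩]
      symm
      apply Finset.sum_eq_zero
      intro j _
      rw [hzero2 j, mul_zero]
  -- conclude Λ = (D Ltil)(D Ltil)ᵀ
  have hA2 : Hext P Km H * (Λ * (Hext P Km H)ᵀ)
      = Hext P Km H * (((D * Ltil) * (D * Ltil)ᵀ) * (Hext P Km H)ᵀ) := by
    have h1 : Hext P Km H * Λ * (Hext P Km H)ᵀ
        = Hext P Km H * ((D * Ltil) * (D * Ltil)ᵀ) * (Hext P Km H)ᵀ := by
      rw [← hΛ, hAbig, hfact]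
      simp only [Matrix.transpose_mul, Matrix.mul_assoc]
    simpa only [Matrix.mul_assoc] using h1
  have h3 : Λ * (Hext P Km H)ᵀ = ((D * Ltil) * (D * Ltil)ᵀ) * (Hext P Km H)ᵀ :=
    aux_cancel_left hHextinj hA2
  have hΛeq : Λ = (D * Ltil) * (D * Ltil)ᵀ := aux_cancel_right hHextinj h3
  have hLL : (Matrix.reindex σ σ) (L * Lᵀ) = Ltil * Ltilᵀ := by
    rw [Matrix.reindex_apply,
      ← Matrix.submatrix_mul_equiv L Lᵀ (⇑σ.symm) (Equiv.refl (Fin K)) (⇑σ.symm),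
      Equiv.coe_refl, hLtildef, Matrix.transpose_submatrix]
  have hΛeq2 : Λ = D * ((Matrix.reindex σ σ) (L * Lᵀ)) * Dᵀ := by
    rw [hΛeq, hLL]
    simp only [Matrix.transpose_mul, Matrix.mul_assoc]
  refine ⟨hd, D, hDblock, hDTD, hDDT, hΛeq2, ?_⟩
  rw [hΛeq2, aux_charpoly_conj_orth hDDT, Matrix.charpoly_reindex]
end

section
/- If the partition 𝒫 is regular-sparse with respect to A, then every eigenvalue of the matrix Λ is a nonnegative integer. -/
open Matrix BigOperators

/-- If `E` has injective `mulVec`, left multiplication by `E` is injective on matrices. -/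
lemma mulLeft_inj {α β γ : Type*} [Fintype α] [Fintype β] [Fintype γ]
    (E : Matrix α β ℝ) (hE : Function.Injective E.mulVec)
    (U V : Matrix β γ ℝ) (h : E * U = E * V) : U = V := by
  ext l j
  have : E.mulVec (fun l => U l j) = E.mulVec (fun l => V l j) := by
    ext i
    simpa [mulVec, dotProduct, Matrix.mul_apply] using congrFun (congrFun h i) j
  exact congrFun (hE this) l

/-- Sandwich cancellation. -/
lemma sandwich_cancel {α β : Type*} [Fintype α] [Fintype β]
    (E : Matrix α β ℝ) (hE : Function.Injective E.mulVec)
    (X Y : Matrix β β ℝ) (h : E * X * Eᵀ = E * Y * Eᵀ) : X = Y := by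
  rw [Matrix.mul_assoc, Matrix.mul_assoc] at h
  have h2 : X * Eᵀ = Y * Eᵀ := mulLeft_inj E hE _ _ h
  have h3 : E * Xᵀ = E * Yᵀ := by
    have := congrArg Matrix.transpose h2
    simpa [Matrix.transpose_mul] using this
  have h4 : Xᵀ = Yᵀ := mulLeft_inj E hE _ _ h3
  simpa using congrArg Matrix.transpose h4

/-- A linearly independent tight frame (indexed with possible zero vectors) is orthonormal. -/
lemma tight_frame_orthonormal {d K : ℕ} (v : Fin K → Fin d → ℝ)
    (hsum : ∑ k, vecMulVec (v k) (v k) = (1 : Matrix (Fin d) (Fin d) ℝ))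
    (hli : LinearIndependent ℝ (fun k : {k : Fin K // v k ≠ 0} => v (k : Fin K))) :
    ∀ k l : Fin K, v k ≠ 0 → v l ≠ 0 → v k ⬝ᵥ v l = if k = l then 1 else 0 := by
  classical
  -- every vector is in the span of the nonzero `v k`
  have hrecon : ∀ y : Fin d → ℝ, y = ∑ k, (v k ⬝ᵥ y) • v k := by
    intro y
    funext i
    have h1 : ((∑ k, vecMulVec (v k) (v k)) *ᵥ y) i = ∑ j, ∑ k, v k i * v k j * y j := by
      simp [mulVec, dotProduct, Matrix.sum_apply, vecMulVec_apply, Finset.sum_mul]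
    have h2 : (∑ k, (v k ⬝ᵥ y) • v k) i = ∑ k, ∑ j, v k j * y j * v k i := by
      simp [Finset.sum_apply, dotProduct, Finset.sum_mul]
    calc y i = (1 *ᵥ y) i := by simp
    _ = ((∑ k, vecMulVec (v k) (v k)) *ᵥ y) i := by rw [hsum]
    _ = ∑ j, ∑ k, v k i * v k j * y j := h1
    _ = ∑ k, ∑ j, v k j * y j * v k i := by
        rw [Finset.sum_comm]
        exact Finset.sum_congr rfl fun k _ => Finset.sum_congr rfl fun j _ => by ring
    _ = (∑ k, (v k ⬝ᵥ y) • v k) i := h2.symm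
  have hspan : ⊤ ≤ Submodule.span ℝ (Set.range fun k : {k : Fin K // v k ≠ 0} => v (k : Fin K)) := by
    intro y _
    rw [hrecon y]
    refine Submodule.sum_mem _ fun k _ => ?_
    by_cases hv : v k = 0
    · simp [hv]
    · exact Submodule.smul_mem _ _ (Submodule.subset_span ⟨⟨k, hv⟩, rfl⟩)
  haveI : Fintype {k : Fin K // v k ≠ 0} := by infer_instance
  let b : Module.Basis {k : Fin K // v k ≠ 0} ℝ (Fin d → ℝ) := Module.Basis.mk hli hspan
  have hcard : Fintype.card {k : Fin K // v k ≠ 0} = d := by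
    rw [← Module.finrank_eq_card_basis b, Module.finrank_fin_fun]
  let e : Fin d ≃ {k : Fin K // v k ≠ 0} := Fintype.equivOfCardEq (by rw [hcard, Fintype.card_fin])
  set W : Matrix (Fin d) (Fin d) ℝ := Matrix.of fun i j => v (e j) i with hWdef
  have hW : W * Wᵀ = 1 := by
    ext i j
    have : ∑ j', v (e j') i * v (e j') j = ∑ k : {k : Fin K // v k ≠ 0}, v (k : Fin K) i * v (k : Fin K) j :=
      Equiv.sum_comp e (fun k : {k : Fin K // v k ≠ 0} => v (k : Fin K) i * v (k : Fin K) j)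
    have h2 : ∑ k : {k : Fin K // v k ≠ 0}, v (k : Fin K) i * v (k : Fin K) j
        = ∑ k ∈ Finset.univ.filter (fun k => v k ≠ 0), v k i * v k j := by
      rw [Finset.sum_subtype (p := fun k => v k ≠ 0) (Finset.univ.filter (fun k => v k ≠ 0))
        (fun k => by simp) (fun k => v k i * v k j)]
    have h3 : ∑ k ∈ Finset.univ.filter (fun k => v k ≠ 0), v k i * v k j
        = ∑ k, v k i * v k j := by
      refine Finset.sum_subset (Finset.filter_subset _ _) ?_
      intro k _ hk
      simp only [Finset.mem_filter, Finset.mem_univ, true_and, not_not] at hk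
      simp [hk]
    have h4 : ∑ k, v k i * v k j = (1 : Matrix (Fin d) (Fin d) ℝ) i j := by
      rw [← hsum]; simp [Matrix.sum_apply, vecMulVec_apply]
    simp only [Matrix.mul_apply, hWdef, Matrix.of_apply, Matrix.transpose_apply]
    rw [this, h2, h3, h4]
  have hW2 : Wᵀ * W = 1 := mul_eq_one_comm.mp hW
  intro k l hk hl
  have hk' : v k = v (e (e.symm ⟨k, hk⟩) : {k : Fin K // v k ≠ 0}) := by simp
  have hl' : v l = v (e (e.symm ⟨l, hl⟩) : {k : Fin K // v k ≠ 0}) := by simp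
  have := congrFun (congrFun hW2 (e.symm ⟨k, hk⟩)) (e.symm ⟨l, hl⟩)
  simp only [Matrix.mul_apply, Matrix.transpose_apply, hWdef, Matrix.of_apply,
    Matrix.one_apply] at this
  simp only [Equiv.apply_symm_apply] at this
  rw [dotProduct, this]
  by_cases hkl : k = l
  · subst hkl; simp
  · have hne : e.symm ⟨k, hk⟩ ≠ e.symm ⟨l, hl⟩ := by
      intro hc
      exact hkl (by simpa using congrArg (fun z => ((e z : {k : Fin K // v k ≠ 0}) : Fin K)) hc)
    simp [hkl, hne]

lemma dotProduct_sum' {ι β : Type*} [Fintype ι] [Fintype β] (v : β → ℝ) (f : ι → β → ℝ) :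
    v ⬝ᵥ (∑ k, f k) = ∑ k, v ⬝ᵥ f k := by
  simp only [dotProduct, Finset.sum_apply, Finset.mul_sum]
  exact Finset.sum_comm

lemma sum_mulVec' {ι α β : Type*} [Fintype ι] [Fintype β] (A : ι → Matrix α β ℝ) (w : β → ℝ) :
    (∑ k, A k) *ᵥ w = ∑ k, A k *ᵥ w := by
  ext i
  simp only [Matrix.mulVec, dotProduct, Matrix.sum_apply, Finset.sum_apply,
    Finset.sum_mul]
  exact Finset.sum_comm

lemma mul_vecMulVec' {α β γ : Type*} [Fintype β] (E : Matrix α β ℝ) (a : β → ℝ) (b : γ → ℝ) :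
    E * vecMulVec a b = vecMulVec (E *ᵥ a) b := by
  ext i j
  simp [Matrix.mul_apply, vecMulVec_apply, Matrix.mulVec, dotProduct,
    Finset.sum_mul, mul_assoc]

lemma vecMulVec_mul' {α β γ : Type*} [Fintype β] (G : Matrix β γ ℝ) (a : α → ℝ) (b : β → ℝ) :
    vecMulVec a b * G = vecMulVec a (b ᵥ* G) := by
  ext i j
  simp [Matrix.mul_apply, vecMulVec_apply, Matrix.vecMul, dotProduct,
    Finset.mul_sum, mul_assoc]

lemma vecMulVec_mulVec' {α β : Type*} [Fintype β] (a : α → ℝ) (b y : β → ℝ) :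
    vecMulVec a b *ᵥ y = (b ⬝ᵥ y) • a := by
  ext i
  simp [vecMulVec_apply, Matrix.mulVec, dotProduct, Finset.mul_sum, mul_comm,
    mul_left_comm]

/-- Proposition 3.3 of the paper. If the partition `𝒫` is regular-sparse
with respect to `A`, then every eigenvalue of `Λ` is a nonnegative integer. -/
theorem eigenvalues_of_lambda_are_nonneg_integers
    {N M K : ℕ} (A : Matrix (Fin N) (Fin N) ℝ)
    (hA : A.PosSemidef) (hrank : A.rank = K)
    (P : Fin M → Finset (Fin N)) (hP : IsPartition P)
    (hreg : RegularSparse K A P)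
    (Km : Fin M → ℕ) (hKm : ∀ m, Km m = patchRank A (P m))
    (H : ∀ m, Matrix ↥(P m) (Fin (Km m)) ℝ)
    (hHli : ∀ m, LinearIndependent ℝ (fun j : Fin (Km m) => fun i : ↥(P m) => H m i j))
    (hH : ∀ m, A.submatrix (fun i : ↥(P m) => (i : Fin N)) (fun i : ↥(P m) => (i : Fin N))
      = H m * (H m)ᵀ)
    (Λ : Matrix ((m : Fin M) × Fin (Km m)) ((m : Fin M) × Fin (Km m)) ℝ)
    (hΛ : A = Hext P Km H * Λ * (Hext P Km H)ᵀ) :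
    ∀ x : ℝ, x ∈ spectrum ℝ Λ → ∃ n : ℕ, x = (n : ℝ) := by
  classical
  -- the decomposition A = ∑ g_k g_kᵀ with regular sparseness
  obtain ⟨g, hgA, hgli⟩ := hreg
  set r : (m : Fin M) → Fin K → (↥(P m) → ℝ) := fun m k => restrictPatch (P m) (g k) with hrdef
  have hAapp : ∀ i j, A i j = ∑ k, g k i * g k j := by
    intro i j; rw [hgA]; simp [Matrix.sum_apply, vecMulVec_apply]
  have hAmm : ∀ m, (H m) * (H m)ᵀ = ∑ k, vecMulVec (r m k) (r m k) := by
    intro m; rw [← hH m]; ext i j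
    simp [Matrix.submatrix_apply, hAapp, Matrix.sum_apply, vecMulVec_apply, hrdef,
      restrictPatch]
  have hHinj : ∀ m, Function.Injective (H m).mulVec := by
    intro m
    rw [Matrix.mulVec_injective_iff]
    exact hHli m
  have hHker : ∀ m (u : Fin (Km m) → ℝ), (H m) *ᵥ u = 0 → u = 0 := by
    intro m u hu
    exact hHinj m (a₂ := 0) (by rw [hu, Matrix.mulVec_zero])
  have hGram : ∀ m, IsUnit ((H m)ᵀ * H m).det := by
    intro m
    rw [← Matrix.isUnit_iff_isUnit_det, ← Matrix.mulVec_injective_iff_isUnit]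
    intro x y hxy
    have hz : ((H m)ᵀ * H m) *ᵥ (x - y) = 0 := by rw [Matrix.mulVec_sub, hxy, sub_self]
    have h0 : (x - y) ⬝ᵥ (((H m)ᵀ * H m) *ᵥ (x - y)) = 0 := by rw [hz, dotProduct_zero]
    rw [← Matrix.mulVec_mulVec, Matrix.dotProduct_mulVec, Matrix.vecMul_transpose,
      dotProduct_self_eq_zero] at h0
    exact sub_eq_zero.mp (hHker m _ h0)
  -- coefficient vectors of the restrictions in terms of the columns of H m
  set c : (m : Fin M) → Fin K → (Fin (Km m) → ℝ) :=
    fun m k => (((H m)ᵀ * H m)⁻¹ * (H m)ᵀ) *ᵥ (r m k) with hcdef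
  have hHc : ∀ m k, (H m) *ᵥ (c m k) = r m k := by
    intro m k
    set w : ↥(P m) → ℝ := r m k - (H m) *ᵥ (c m k) with hw
    have hHHL : (H m)ᵀ * (H m) * (((H m)ᵀ * H m)⁻¹ * (H m)ᵀ) = (H m)ᵀ := by
      rw [← Matrix.mul_assoc, Matrix.mul_nonsing_inv _ (hGram m), Matrix.one_mul]
    have hHtw : (H m)ᵀ *ᵥ w = 0 := by
      calc (H m)ᵀ *ᵥ w
          = (H m)ᵀ *ᵥ (r m k) - ((H m)ᵀ * H m) *ᵥ (c m k) := by
            rw [hw, Matrix.mulVec_sub, Matrix.mulVec_mulVec]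
        _ = (H m)ᵀ *ᵥ (r m k)
            - (((H m)ᵀ * H m) * (((H m)ᵀ * H m)⁻¹ * (H m)ᵀ)) *ᵥ (r m k) := by
            rw [hcdef, Matrix.mulVec_mulVec]
        _ = 0 := by rw [hHHL, sub_self]
    have hquad : w ⬝ᵥ ((H m * (H m)ᵀ) *ᵥ w) = 0 := by
      rw [← Matrix.mulVec_mulVec, hHtw, Matrix.mulVec_zero, dotProduct_zero]
    have hsq : ∑ j, (r m j ⬝ᵥ w) ^ 2 = 0 := by
      have h1 : w ⬝ᵥ ((∑ j, vecMulVec (r m j) (r m j)) *ᵥ w) = 0 := by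
        rw [← hAmm m]; exact hquad
      rw [sum_mulVec'] at h1
      have h2 : ∀ j : Fin K, vecMulVec (r m j) (r m j) *ᵥ w = (r m j ⬝ᵥ w) • r m j :=
        fun j => vecMulVec_mulVec' _ _ _
      simp only [h2] at h1
      rw [dotProduct_sum'] at h1
      rw [← h1]
      refine Finset.sum_congr rfl fun j _ => ?_
      rw [dotProduct_smul, smul_eq_mul, dotProduct_comm, sq]
    have hrw : r m k ⬝ᵥ w = 0 := by
      have h3 := (Finset.sum_eq_zero_iff_of_nonneg (fun j _ => sq_nonneg _)).mp hsq k
        (Finset.mem_univ k)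
      exact pow_eq_zero_iff two_ne_zero |>.mp h3
    have hww : w ⬝ᵥ w = 0 := by
      nth_rewrite 2 [hw]
      rw [dotProduct_sub]
      rw [dotProduct_comm w (r m k), hrw]
      rw [Matrix.dotProduct_mulVec, ← Matrix.mulVec_transpose, hHtw, zero_dotProduct,
        sub_self]
    have hw0 : w = 0 := dotProduct_self_eq_zero.mp hww
    rw [hw] at hw0
    exact (sub_eq_zero.mp hw0).symm
  have hceq : ∀ m k, c m k ≠ 0 ↔ r m k ≠ 0 := by
    intro m k
    constructor
    · intro hc hr0
      exact hc (by rw [hcdef]; dsimp only; rw [hr0, Matrix.mulVec_zero])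
    · intro hr hc0
      exact hr (by rw [← hHc m k, hc0, Matrix.mulVec_zero])
  have hcsum : ∀ m, ∑ k, vecMulVec (c m k) (c m k)
      = (1 : Matrix (Fin (Km m)) (Fin (Km m)) ℝ) := by
    intro m
    apply sandwich_cancel (H m) (hHinj m)
    have expand : (H m) * (∑ k, vecMulVec (c m k) (c m k)) * (H m)ᵀ
        = ∑ k, vecMulVec ((H m) *ᵥ c m k) ((H m) *ᵥ c m k) := by
      rw [Matrix.mul_sum, Matrix.sum_mul]
      exact Finset.sum_congr rfl fun k _ => by
        rw [mul_vecMulVec', vecMulVec_mul', Matrix.vecMul_transpose]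
    rw [expand]
    simp only [hHc]
    rw [← hAmm m, Matrix.mul_one]
  have hcli : ∀ m, LinearIndependent ℝ
      (fun k : {k : Fin K // c m k ≠ 0} => c m (k : Fin K)) := by
    intro m
    rw [Fintype.linearIndependent_iff]
    intro a ha
    have hra : ∑ k : {k : Fin K // c m k ≠ 0}, a k • r m (k : Fin K) = 0 := by
      have h2 : (H m).mulVecLin (∑ k : {k : Fin K // c m k ≠ 0}, a k • c m (k : Fin K))
          = 0 := by rw [ha]; simp
      rw [_root_.map_sum] at h2
      simp only [LinearMap.map_smul, Matrix.mulVecLin_apply, hHc] at h2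
      exact h2
    let es : {k : Fin K // c m k ≠ 0} ≃ {k : Fin K // r m k ≠ 0} :=
      Equiv.subtypeEquivRight (hceq m)
    have hgli' : LinearIndependent ℝ
        (fun k : {k : Fin K // r m k ≠ 0} => r m (k : Fin K)) := hgli m
    have hb := Fintype.linearIndependent_iff.mp hgli' (fun k' => a (es.symm k'))
    have hsum : ∑ k' : {k : Fin K // r m k ≠ 0}, a (es.symm k') • r m (k' : Fin K) = 0 := by
      rw [← Equiv.sum_comp es (fun k' : {k : Fin K // r m k ≠ 0} =>
        a (es.symm k') • r m (k' : Fin K))]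
      simp only [Equiv.symm_apply_apply]
      have : ∀ k : {k : Fin K // c m k ≠ 0}, ((es k : {k : Fin K // r m k ≠ 0}) : Fin K)
          = (k : Fin K) := fun k => rfl
      simp only [this]
      exact hra
    intro k
    have := hb hsum (es k)
    simpa using this
  have horth : ∀ m, ∀ k l : Fin K, c m k ≠ 0 → c m l ≠ 0 →
      c m k ⬝ᵥ c m l = if k = l then 1 else 0 :=
    fun m => tight_frame_orthonormal (c m) (hcsum m) (hcli m)
  -- the global coefficient matrix
  set Cm : Matrix ((m : Fin M) × Fin (Km m)) (Fin K) ℝ :=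
    Matrix.of (fun p k => c p.1 k p.2) with hCm
  have hHextC : Hext P Km H * Cm = Matrix.of (fun i k => g k i) := by
    ext i k
    obtain ⟨m, him⟩ := hP.2.2 i
    have hsig : (Hext P Km H * Cm) i k
        = ∑ m', ∑ j, Hext P Km H i ⟨m', j⟩ * c m' k j := by
      rw [Matrix.mul_apply, ← Finset.univ_sigma_univ, Finset.sum_sigma]
      rfl
    rw [hsig, Finset.sum_eq_single m
      (fun m' _ hm' => Finset.sum_eq_zero fun j _ => by
        have hz : Hext P Km H i ⟨m', j⟩ = 0 := by
          show (if h : i ∈ P m' then H m' ⟨i, h⟩ j else 0) = 0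
          rw [dif_neg]
          intro hmem
          exact (Finset.disjoint_left.mp (hP.2.1 m' m hm')) hmem him
        rw [hz, zero_mul])
      (fun h => absurd (Finset.mem_univ m) h)]
    have h1 : ∀ j, Hext P Km H i ⟨m, j⟩ = H m ⟨i, him⟩ j := fun j => by
      show (if h : i ∈ P m then H m ⟨i, h⟩ j else 0) = H m ⟨i, him⟩ j
      rw [dif_pos him]
    simp only [h1]
    have h2 : (H m *ᵥ c m k) ⟨i, him⟩ = g k i := by rw [hHc m k]; rfl
    show ∑ j, H m ⟨i, him⟩ j * c m k j = g k i
    rw [← h2]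
    rfl
  have hGG : A = (Matrix.of fun i k => g k i) * (Matrix.of fun i k => g k i)ᵀ := by
    ext i j
    rw [hAapp i j]
    simp [Matrix.mul_apply]
  have hACC : Hext P Km H * (Cm * Cmᵀ) * (Hext P Km H)ᵀ = A := by
    rw [hGG, ← hHextC, Matrix.transpose_mul]
    simp only [Matrix.mul_assoc]
  have hHextInj : Function.Injective (Hext P Km H).mulVec := by
    have key : ∀ x, Hext P Km H *ᵥ x = 0 → x = 0 := by
      intro x hx
      have hxm : ∀ m, (fun j => x ⟨m, j⟩) = 0 := by
        intro m
        refine hHker m _ ?_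
        ext ip
        obtain ⟨i, him⟩ := ip
        have h0 : (Hext P Km H *ᵥ x) i = 0 := by rw [hx]; rfl
        have hsig : (Hext P Km H *ᵥ x) i
            = ∑ m', ∑ j, Hext P Km H i ⟨m', j⟩ * x ⟨m', j⟩ := by
          show ∑ p, Hext P Km H i p * x p = _
          rw [← Finset.univ_sigma_univ, Finset.sum_sigma]
        rw [hsig, Finset.sum_eq_single m
          (fun m' _ hm' => Finset.sum_eq_zero fun j _ => by
            have hz : Hext P Km H i ⟨m', j⟩ = 0 := by
              show (if h : i ∈ P m' then H m' ⟨i, h⟩ j else 0) = 0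
              rw [dif_neg]
              intro hmem
              exact (Finset.disjoint_left.mp (hP.2.1 m' m hm')) hmem him
            rw [hz, zero_mul])
          (fun h => absurd (Finset.mem_univ m) h)] at h0
        have h1 : ∀ j, Hext P Km H i ⟨m, j⟩ = H m ⟨i, him⟩ j := fun j => by
          show (if h : i ∈ P m then H m ⟨i, h⟩ j else 0) = H m ⟨i, him⟩ j
          rw [dif_pos him]
        simp only [h1] at h0
        exact h0
      funext p
      obtain ⟨m, j⟩ := p
      exact congrFun (hxm m) j
    intro x y hxy
    exact sub_eq_zero.mp (key (x - y) (by rw [Matrix.mulVec_sub, hxy, sub_self]))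
  have hLam : Λ = Cm * Cmᵀ := by
    apply sandwich_cancel (Hext P Km H) hHextInj
    rw [← hΛ]
    exact hACC.symm
  -- CᵀC is diagonal with natural number entries
  have hD : Cmᵀ * Cm = Matrix.diagonal
      (fun k => ((Finset.univ.filter (fun m => c m k ≠ 0)).card : ℝ)) := by
    ext k l
    have hsig : (Cmᵀ * Cm) k l = ∑ m, ∑ j, c m k j * c m l j := by
      rw [Matrix.mul_apply, ← Finset.univ_sigma_univ, Finset.sum_sigma]
      rfl
    rw [hsig]
    by_cases hkl : k = l
    · subst hkl
      rw [Matrix.diagonal_apply_eq]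
      have hterm : ∀ m, ∑ j, c m k j * c m k j = if c m k ≠ 0 then (1 : ℝ) else 0 := by
        intro m
        by_cases hcm : c m k = 0
        · simp [hcm]
        · rw [if_pos hcm]
          have := horth m k k hcm hcm
          simpa [dotProduct] using this
      rw [Finset.sum_congr rfl (fun m _ => hterm m), Finset.sum_boole]
    · rw [Matrix.diagonal_apply_ne _ hkl]
      apply Finset.sum_eq_zero
      intro m _
      by_cases hcmk : c m k = 0
      · simp [hcmk]
      by_cases hcml : c m l = 0
      · simp [hcml]
      have := horth m k l hcmk hcml
      rw [if_neg hkl] at this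
      simpa [dotProduct] using this
  -- transfer of eigenvalues
  intro x hx
  by_cases hx0 : x = 0
  · exact ⟨0, by simp [hx0]⟩
  rw [spectrum.mem_iff] at hx
  have hdet : (x • (1 : Matrix ((m : Fin M) × Fin (Km m))
      ((m : Fin M) × Fin (Km m)) ℝ) - Λ).det = 0 := by
    by_contra hne
    apply hx
    rw [Algebra.algebraMap_eq_smul_one]
    exact (Matrix.isUnit_iff_isUnit_det _).mpr (isUnit_iff_ne_zero.mpr hne)
  have hxinv : x * -x⁻¹ = -1 := by field_simp
  have hsplit : x • (1 : Matrix ((m : Fin M) × Fin (Km m))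
      ((m : Fin M) × Fin (Km m)) ℝ) - Λ = x • (1 + ((-x⁻¹) • Cm) * Cmᵀ) := by
    rw [hLam, Matrix.smul_mul, smul_add, smul_smul, hxinv, neg_one_smul, ← sub_eq_add_neg]
  rw [hsplit, Matrix.det_smul] at hdet
  have hd2 : (1 + ((-x⁻¹) • Cm) * Cmᵀ).det = 0 := by
    rcases mul_eq_zero.mp hdet with h | h
    · exact absurd h (pow_ne_zero _ hx0)
    · exact h
  rw [Matrix.det_one_add_mul_comm] at hd2
  have hdiag : (1 : Matrix (Fin K) (Fin K) ℝ) + Cmᵀ * ((-x⁻¹) • Cm)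
      = Matrix.diagonal (fun k => 1 + -x⁻¹
        * ((Finset.univ.filter (fun m => c m k ≠ 0)).card : ℝ)) := by
    rw [Matrix.mul_smul, hD]
    ext k l
    by_cases hkl : k = l
    · subst hkl
      simp
    · simp [Matrix.diagonal_apply_ne _ hkl, Matrix.one_apply_ne hkl]
  rw [hdiag, Matrix.det_diagonal] at hd2
  obtain ⟨k, _, hk⟩ := Finset.prod_eq_zero_iff.mp hd2
  refine ⟨(Finset.univ.filter (fun m => c m k ≠ 0)).card, ?_⟩
  set d : ℝ := ((Finset.univ.filter (fun m => c m k ≠ 0)).card : ℝ) with hd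
  have h1 : x⁻¹ * d = 1 := by
    have : 1 + -x⁻¹ * d = 0 := hk
    linarith
  have h2 : x * (x⁻¹ * d) = x * 1 := by rw [h1]
  rw [← mul_assoc, mul_inv_cancel₀ hx0, one_mul, mul_one] at h2
  exact h2.symm
end

section
/- Suppose 𝒫 is regular-sparse with respect to A, and let (ψ_1,...,ψ_K) and (g_1,...,g_K) be two sets of intrinsic sparse modes of A. Partition the index set {1,...,K} into groups Q_1,...,Q_Q such that ψ_k and ψ_{k'} are unidentifiable on 𝒫 whenever k and k' lie in the same group, and identifiable whenever they lie in different groups; let n_q = |Q_q|. Then there exist a bijection σ of {1,...,K} and orthogonal matrices U_q ∈ O(n_q), q = 1,...,Q, such that for each q the matrix whose columns are (g_{σ(k)})_{k∈Q_q} equals the matrix whose columns are (ψ_k)_{k∈Q_q} multiplied on the right by U_q. In particular, the intrinsic sparse modes of A are unique up to permutations and orthogonal transformations within groups of unidentifiable modes. -/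
open Matrix BigOperators

/-! ### Auxiliary lemmas -/

open Submodule Module

lemma gram_rank_eq {κ n : Type*} [Fintype κ] [Fintype n] [DecidableEq n]
    (v : κ → n → ℝ) :
    (Matrix.of fun i j => ∑ k, v k i * v k j : Matrix n n ℝ).rank
      = finrank ℝ (span ℝ (Set.range v)) := by
  have h : (Matrix.of fun i j => ∑ k, v k i * v k j : Matrix n n ℝ)
      = (Matrix.of fun i k => v k i : Matrix n κ ℝ) * (Matrix.of fun i k => v k i : Matrix n κ ℝ)ᵀ := by
    ext i j
    simp [Matrix.mul_apply, mul_comm]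
  rw [h, Matrix.rank_self_mul_transpose, Matrix.rank_eq_finrank_span_cols]
  have h2 : Set.range ((Matrix.of fun i k => v k i : Matrix n κ ℝ).col) = Set.range v := rfl
  rw [h2]

lemma span_nonzero_eq {κ n : Type*} (v : κ → n → ℝ) :
    span ℝ (Set.range fun k : {k // v k ≠ 0} => v (k : κ))
      = span ℝ (Set.range v) := by
  apply le_antisymm
  · exact span_mono (by rintro x ⟨k, rfl⟩; exact ⟨k, rfl⟩)
  · rw [span_le]
    rintro x ⟨k, rfl⟩
    by_cases h : v k = 0
    · rw [h]; exact zero_mem _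
    · exact subset_span ⟨⟨k, h⟩, rfl⟩

lemma ncard_setOf {α : Type*} [Fintype α] (p : α → Prop) [DecidablePred p] :
    {x | p x}.ncard = (Finset.univ.filter p).card := by
  rw [← Set.ncard_coe_finset]
  congr 1
  ext x; simp

section patch

variable {N M K : ℕ} {A : Matrix (Fin N) (Fin N) ℝ} {P : Fin M → Finset (Fin N)}

lemma patchRank_eq_finrank (φ : Fin K → Fin N → ℝ)
    (hφ : A = ∑ k, vecMulVec (φ k) (φ k)) (m : Fin M) :
    patchRank A (P m)
      = finrank ℝ (span ℝ (Set.range fun k => restrictPatch (P m) (φ k))) := by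
  have h : A.submatrix (fun i : ↥(P m) => (i : Fin N)) (fun i : ↥(P m) => (i : Fin N))
      = Matrix.of fun i j => ∑ k, restrictPatch (P m) (φ k) i * restrictPatch (P m) (φ k) j := by
    ext i j
    simp [hφ, restrictPatch, Matrix.sum_apply, vecMulVec_apply]
  rw [patchRank, h, gram_rank_eq]

lemma sparseness_sum_eq (φ : Fin K → Fin N → ℝ) :
    ∑ k, sparseness P (φ k)
      = ∑ m, (Finset.univ.filter fun k => restrictPatch (P m) (φ k) ≠ 0).card := by
  classical
  have h : ∀ k, sparseness P (φ k)
      = (Finset.univ.filter fun m => restrictPatch (P m) (φ k) ≠ 0).card :=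
    fun k => ncard_setOf _
  rw [Finset.sum_congr rfl fun k _ => h k]
  simp only [Finset.card_filter]
  exact Finset.sum_comm

lemma patchRank_le_card (φ : Fin K → Fin N → ℝ)
    (hφ : A = ∑ k, vecMulVec (φ k) (φ k)) (m : Fin M) :
    patchRank A (P m)
      ≤ (Finset.univ.filter fun k => restrictPatch (P m) (φ k) ≠ 0).card := by
  classical
  rw [patchRank_eq_finrank φ hφ m, ← span_nonzero_eq, ← Fintype.card_subtype]
  have := finrank_range_le_card (R := ℝ)
    (fun k : {k : Fin K // restrictPatch (P m) (φ k) ≠ 0} => restrictPatch (P m) (φ (k : Fin K)))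
  rw [Set.finrank] at this
  exact this

lemma regsparse_card_eq (g₀ : Fin K → Fin N → ℝ)
    (hA₀ : A = ∑ k, vecMulVec (g₀ k) (g₀ k))
    (h₀ : ∀ m, LinearIndependent ℝ
      (fun k : {k : Fin K // restrictPatch (P m) (g₀ k) ≠ 0} =>
        restrictPatch (P m) (g₀ (k : Fin K)))) (m : Fin M) :
    (Finset.univ.filter fun k => restrictPatch (P m) (g₀ k) ≠ 0).card
      = patchRank A (P m) := by
  classical
  rw [patchRank_eq_finrank g₀ hA₀ m, ← span_nonzero_eq, ← Fintype.card_subtype]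
  exact (finrank_span_eq_card (h₀ m)).symm

lemma ism_patch_li (hreg : RegularSparse K A P) {ψ : Fin K → Fin N → ℝ}
    (hψ : IsISM A P ψ) (m : Fin M) :
    LinearIndependent ℝ (fun k : {k : Fin K // restrictPatch (P m) (ψ k) ≠ 0} =>
      restrictPatch (P m) (ψ (k : Fin K))) := by
  classical
  obtain ⟨hAψ, hmin⟩ := hψ
  obtain ⟨g₀, hA₀, h₀⟩ := hreg
  have hcard : ∀ m', (Finset.univ.filter fun k => restrictPatch (P m') (ψ k) ≠ 0).card
      = patchRank A (P m') := by
    have hle : ∀ m' ∈ Finset.univ, patchRank A (P m')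
        ≤ (Finset.univ.filter fun k => restrictPatch (P m') (ψ k) ≠ 0).card :=
      fun m' _ => patchRank_le_card ψ hAψ m'
    have hsum : ∑ m', (Finset.univ.filter fun k => restrictPatch (P m') (ψ k) ≠ 0).card
        ≤ ∑ m', patchRank A (P m') := by
      calc ∑ m', (Finset.univ.filter fun k => restrictPatch (P m') (ψ k) ≠ 0).card
          = ∑ k, sparseness P (ψ k) := (sparseness_sum_eq ψ).symm
        _ ≤ ∑ k, sparseness P (g₀ k) := hmin g₀ hA₀
        _ = ∑ m', (Finset.univ.filter fun k => restrictPatch (P m') (g₀ k) ≠ 0).card :=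
            sparseness_sum_eq g₀
        _ = ∑ m', patchRank A (P m') :=
            Finset.sum_congr rfl fun m' _ => regsparse_card_eq g₀ hA₀ h₀ m'
    intro m'
    by_contra hne
    have hlt : patchRank A (P m')
        < (Finset.univ.filter fun k => restrictPatch (P m') (ψ k) ≠ 0).card :=
      lt_of_le_of_ne (hle m' (Finset.mem_univ m')) (Ne.symm hne)
    have := Finset.sum_lt_sum hle ⟨m', Finset.mem_univ m', hlt⟩
    omega
  apply linearIndependent_iff_card_eq_finrank_span.mpr
  rw [Set.finrank, span_nonzero_eq, ← patchRank_eq_finrank ψ hAψ m, Fintype.card_subtype,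
    hcard m]

lemma decomp_mulVec (φ : Fin K → Fin N → ℝ)
    (hφ : A = ∑ k, vecMulVec (φ k) (φ k)) (y : Fin N → ℝ) :
    A.mulVec y = ∑ k, (φ k ⬝ᵥ y) • φ k := by
  ext i
  simp only [mulVec, dotProduct, hφ, Matrix.sum_apply, vecMulVec_apply,
    Finset.sum_apply, Pi.smul_apply, smul_eq_mul, Finset.sum_mul]
  rw [Finset.sum_comm]
  exact Finset.sum_congr rfl fun k _ => Finset.sum_congr rfl fun j _ => by ring

lemma decomp_span (φ : Fin K → Fin N → ℝ)
    (hφ : A = ∑ k, vecMulVec (φ k) (φ k)) :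
    LinearMap.range A.mulVecLin ≤ span ℝ (Set.range φ) := by
  rintro x ⟨y, rfl⟩
  have : A.mulVecLin y = ∑ k, (φ k ⬝ᵥ y) • φ k := decomp_mulVec φ hφ y
  rw [this]
  exact sum_mem fun k _ => smul_mem _ _ (subset_span ⟨k, rfl⟩)

lemma decomp_li (hrank : A.rank = K) (φ : Fin K → Fin N → ℝ)
    (hφ : A = ∑ k, vecMulVec (φ k) (φ k)) :
    LinearIndependent ℝ φ := by
  apply linearIndependent_iff_card_eq_finrank_span.mpr
  rw [Fintype.card_fin, Set.finrank]
  refine le_antisymm ?_ ?_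
  · exact le_trans (le_of_eq hrank.symm) (Submodule.finrank_mono (decomp_span φ hφ))
  · have := finrank_range_le_card (R := ℝ) φ
    rw [Set.finrank, Fintype.card_fin] at this
    exact this

lemma decomp_range_eq (hrank : A.rank = K) (φ : Fin K → Fin N → ℝ)
    (hφ : A = ∑ k, vecMulVec (φ k) (φ k)) :
    LinearMap.range A.mulVecLin = span ℝ (Set.range φ) := by
  apply Submodule.eq_of_le_of_finrank_le (decomp_span φ hφ)
  have h1 : finrank ℝ (span ℝ (Set.range φ)) ≤ K := by
    have := finrank_range_le_card (R := ℝ) φ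
    rwa [Set.finrank, Fintype.card_fin] at this
  have h2 : finrank ℝ (LinearMap.range A.mulVecLin) = K := hrank
  omega

lemma coeff_orth (ψ g : Fin K → Fin N → ℝ) (t : Fin K → Fin K → ℝ)
    (hψli : LinearIndependent ℝ ψ)
    (hgi : ∀ j i, g j i = ∑ k, t j k * ψ k i)
    (hgram : ∀ i i', ∑ j, g j i * g j i' = ∑ k, ψ k i * ψ k i') :
    ∀ k l, ∑ j, t j k * t j l = (if k = l then 1 else 0) := by
  have hli := Fintype.linearIndependent_iff.mp hψli
  have expand : ∀ i i',
      ∑ k, ∑ l, (∑ j, t j k * t j l) * (ψ k i * ψ l i') = ∑ k, ψ k i * ψ k i' := by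
    intro i i'
    rw [← hgram i i']
    calc ∑ k, ∑ l, (∑ j, t j k * t j l) * (ψ k i * ψ l i')
        = ∑ k, ∑ j, ∑ l, (t j k * t j l) * (ψ k i * ψ l i') := by
          refine Finset.sum_congr rfl fun k _ => ?_
          simp only [Finset.sum_mul]
          exact Finset.sum_comm
      _ = ∑ j, ∑ k, ∑ l, (t j k * t j l) * (ψ k i * ψ l i') := Finset.sum_comm
      _ = ∑ j, g j i * g j i' := by
          refine Finset.sum_congr rfl fun j _ => ?_
          rw [hgi j i, hgi j i', Finset.sum_mul_sum]
          exact Finset.sum_congr rfl fun k _ => Finset.sum_congr rfl fun l _ => by ring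
  have hmid : ∀ k i', (∑ l, (∑ j, t j l * t j k) * ψ l i') = ψ k i' := by
    intro k i'
    have hz : ∑ k', ((∑ l, (∑ j, t j k' * t j l) * ψ l i') - ψ k' i') • ψ k' = 0 := by
      ext i
      simp only [Finset.sum_apply, Pi.smul_apply, smul_eq_mul, sub_mul, Pi.zero_apply,
        Finset.sum_sub_distrib]
      rw [sub_eq_zero]
      calc ∑ k', (∑ l, (∑ j, t j k' * t j l) * ψ l i') * ψ k' i
          = ∑ k', ∑ l, (∑ j, t j k' * t j l) * (ψ k' i * ψ l i') := by
            refine Finset.sum_congr rfl fun k' _ => ?_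
            rw [Finset.sum_mul]
            exact Finset.sum_congr rfl fun l _ => by ring
        _ = ∑ k', ψ k' i * ψ k' i' := expand i i'
        _ = ∑ k', ψ k' i' * ψ k' i := Finset.sum_congr rfl fun k' _ => by ring
    have := hli _ hz k
    have h2 : (∑ l, (∑ j, t j k * t j l) * ψ l i') = ψ k i' := by
      have := sub_eq_zero.mp this
      linarith [this]
    calc (∑ l, (∑ j, t j l * t j k) * ψ l i')
        = ∑ l, (∑ j, t j k * t j l) * ψ l i' := by
          refine Finset.sum_congr rfl fun l _ => ?_
          congr 1
          exact Finset.sum_congr rfl fun j _ => by ring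
      _ = ψ k i' := h2
  intro k l
  have hz : ∑ l', ((∑ j, t j l' * t j k) - (if k = l' then 1 else 0)) • ψ l' = 0 := by
    ext i'
    simp only [Finset.sum_apply, Pi.smul_apply, smul_eq_mul, sub_mul, Pi.zero_apply,
      Finset.sum_sub_distrib]
    rw [sub_eq_zero, hmid k i']
    rw [Finset.sum_congr rfl (fun l' _ => by
      rw [ite_mul, one_mul, zero_mul] : ∀ l' ∈ Finset.univ,
        (if k = l' then (1:ℝ) else 0) * ψ l' i' = if k = l' then ψ l' i' else 0)]
    rw [Finset.sum_ite_eq]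
    simp
  have := hli _ hz l
  have h2 := sub_eq_zero.mp this
  calc ∑ j, t j k * t j l = ∑ j, t j l * t j k := Finset.sum_congr rfl fun j _ => by ring
    _ = if k = l then 1 else 0 := h2

lemma support_transfer {Pm : Finset (Fin N)} (ψ : Fin K → Fin N → ℝ)
    (hpli : LinearIndependent ℝ (fun k : {k : Fin K // restrictPatch Pm (ψ k) ≠ 0} =>
      restrictPatch Pm (ψ (k : Fin K))))
    (c : Fin K → ℝ) (v : Fin N → ℝ) (hv : ∀ i, v i = ∑ k, c k * ψ k i)
    (hvz : restrictPatch Pm v = 0) :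
    ∀ k, restrictPatch Pm (ψ k) ≠ 0 → c k = 0 := by
  classical
  have hfull : ∑ k : Fin K, c k • restrictPatch Pm (ψ k) = 0 := by
    ext i
    simp only [Finset.sum_apply, Pi.smul_apply, smul_eq_mul, Pi.zero_apply]
    have h0 := congrFun hvz i
    simp only [restrictPatch, Pi.zero_apply] at h0
    rw [← h0, hv i]
    rfl
  have h1 : ∑ k ∈ Finset.univ.filter (fun k => restrictPatch Pm (ψ k) ≠ 0),
      c k • restrictPatch Pm (ψ k) = ∑ k : Fin K, c k • restrictPatch Pm (ψ k) := by
    apply Finset.sum_filter_of_ne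
    intro k _ hne
    by_contra hres
    exact hne (by rw [hres, smul_zero])
  have h2 : ∑ k ∈ Finset.univ.filter (fun k => restrictPatch Pm (ψ k) ≠ 0),
      c k • restrictPatch Pm (ψ k)
      = ∑ k : {k : Fin K // restrictPatch Pm (ψ k) ≠ 0},
          c (k : Fin K) • restrictPatch Pm (ψ (k : Fin K)) := by
    apply Finset.sum_subtype
    intro x; simp
  have hz : ∑ k : {k : Fin K // restrictPatch Pm (ψ k) ≠ 0},
      c (k : Fin K) • restrictPatch Pm (ψ (k : Fin K)) = 0 := by
    rw [← h2, h1, hfull]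
  intro k hk
  exact Fintype.linearIndependent_iff.mp hpli _ hz ⟨k, hk⟩

end patch

/-- Theorem 3.1 of the paper. Suppose `𝒫` is regular-sparse w.r.t. `A` and
`(ψ_1,...,ψ_K)`, `(g_1,...,g_K)` are two sets of intrinsic sparse modes of `A`. Partition
`{1,...,K}` into groups `Q_1,...,Q_Q` of pairwise unidentifiable modes, identifiable across
different groups. Then there exist a bijection `σ` of `{1,...,K}` and orthogonal matrices
`U_q ∈ O(n_q)` such that for each `q` the matrix with columns `(g_{σ(k)})_{k ∈ Q_q}` equals
the matrix with columns `(ψ_k)_{k ∈ Q_q}` multiplied on the right by `U_q`. -/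
theorem ism_unique_up_to_rotations_of_unidentifiable_groups
    {N M K : ℕ} (A : Matrix (Fin N) (Fin N) ℝ)
    (hA : A.PosSemidef) (hrank : A.rank = K)
    (P : Fin M → Finset (Fin N)) (hP : IsPartition P)
    (hreg : RegularSparse K A P)
    (ψ : Fin K → Fin N → ℝ) (hψ : IsISM A P ψ)
    (g : Fin K → Fin N → ℝ) (hg : IsISM A P g)
    (Qn : ℕ) (Q : Fin Qn → Finset (Fin K))
    (hQne : ∀ q, (Q q).Nonempty)
    (hQdisj : ∀ q q', q ≠ q' → Disjoint (Q q) (Q q'))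
    (hQcover : ∀ k : Fin K, ∃ q, k ∈ Q q)
    (hQsame : ∀ q, ∀ k ∈ Q q, ∀ k' ∈ Q q, Unidentifiable P (ψ k) (ψ k'))
    (hQdiff : ∀ q q', q ≠ q' → ∀ k ∈ Q q, ∀ k' ∈ Q q', ¬ Unidentifiable P (ψ k) (ψ k')) :
    ∃ (σ : Equiv.Perm (Fin K)) (U : ∀ q, Matrix ↥(Q q) ↥(Q q) ℝ),
      (∀ q, (U q)ᵀ * U q = 1 ∧ U q * (U q)ᵀ = 1) ∧
      ∀ (q : Fin Qn) (k : ↥(Q q)) (i : Fin N),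
        g (σ (k : Fin K)) i = ∑ k' : ↥(Q q), ψ (k' : Fin K) i * U q k' k := by
  classical
  obtain ⟨hAψ, hψmin⟩ := id hψ
  obtain ⟨hAg, hgmin⟩ := id hg
  -- global linear independence and equality of spans
  have hψli : LinearIndependent ℝ ψ := decomp_li hrank ψ hAψ
  have hspan : span ℝ (Set.range g) = span ℝ (Set.range ψ) :=
    (decomp_range_eq hrank g hAg).symm.trans (decomp_range_eq hrank ψ hAψ)
  have hgmem : ∀ j, g j ∈ span ℝ (Set.range ψ) := fun j => hspan ▸ subset_span ⟨j, rfl⟩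
  have hex : ∀ j, ∃ c : Fin K → ℝ, ∑ k, c k • ψ k = g j := fun j =>
    (mem_span_range_iff_exists_fun ℝ).mp (hgmem j)
  choose t ht using hex
  have hgi : ∀ j i, g j i = ∑ k, t j k * ψ k i := by
    intro j i
    rw [← ht j]
    simp [Finset.sum_apply]
  have hgram : ∀ i i', ∑ j, g j i * g j i' = ∑ k, ψ k i * ψ k i' := by
    intro i i'
    have e1 : A i i' = ∑ k, ψ k i * ψ k i' := by
      rw [hAψ]; simp [Matrix.sum_apply, vecMulVec_apply]
    have e2 : A i i' = ∑ j, g j i * g j i' := by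
      rw [hAg]; simp [Matrix.sum_apply, vecMulVec_apply]
    rw [← e2, e1]
  -- orthogonality of the coefficient matrix
  have hS : ∀ k l, ∑ j, t j k * t j l = (if k = l then 1 else 0) :=
    coeff_orth ψ g t hψli hgi hgram
  have hSmat : (Matrix.of t)ᵀ * (Matrix.of t) = 1 := by
    ext k l
    simp only [Matrix.mul_apply, transpose_apply, Matrix.of_apply, Matrix.one_apply]
    exact hS k l
  have hSmat' : (Matrix.of t) * (Matrix.of t)ᵀ = 1 := mul_eq_one_comm.mp hSmat
  have hSS : ∀ j j', ∑ k, t j k * t j' k = (if j = j' then 1 else 0) := by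
    intro j j'
    have h := congrFun (congrFun (congrArg (fun (X : Matrix (Fin K) (Fin K) ℝ) => (X : Fin K → Fin K → ℝ)) hSmat') j) j'
    simpa [Matrix.mul_apply, Matrix.one_apply] using h
  -- the inverse relation
  have hψgt : ∀ k i, ψ k i = ∑ j, t j k * g j i := by
    intro k i
    calc ψ k i = ∑ l, (if k = l then (1:ℝ) else 0) * ψ l i := by
          rw [Finset.sum_congr rfl (fun l _ => by
            rw [ite_mul, one_mul, zero_mul] : ∀ l ∈ Finset.univ,
              (if k = l then (1:ℝ) else 0) * ψ l i = if k = l then ψ l i else 0),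
            Finset.sum_ite_eq]
          simp
      _ = ∑ l, (∑ j, t j k * t j l) * ψ l i := by
          refine Finset.sum_congr rfl fun l _ => ?_
          rw [hS k l]
      _ = ∑ j, t j k * g j i := by
          simp only [Finset.sum_mul, Finset.mul_sum, hgi]
          rw [Finset.sum_comm]
          exact Finset.sum_congr rfl fun j _ => Finset.sum_congr rfl fun l _ => by ring
  -- patch-wise linear independence of both ISMs
  have hψpli := fun m => ism_patch_li hreg hψ m
  have hgpli := fun m => ism_patch_li hreg hg m
  -- support transfer
  have hsupp1 : ∀ m j k, t j k ≠ 0 → restrictPatch (P m) (ψ k) ≠ 0 →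
      restrictPatch (P m) (g j) ≠ 0 := by
    intro m j k htjk hψk
    by_contra hgz
    exact htjk (support_transfer ψ (hψpli m) (t j) (g j) (hgi j) hgz k hψk)
  have hsupp2 : ∀ m j k, t j k ≠ 0 → restrictPatch (P m) (g j) ≠ 0 →
      restrictPatch (P m) (ψ k) ≠ 0 := by
    intro m j k htjk hgj
    by_contra hψz
    exact htjk (support_transfer g (hgpli m) (fun j' => t j' k) (ψ k) (hψgt k) hψz j hgj)
  -- the group of each index
  have hqex : ∀ k : Fin K, ∃ q, k ∈ Q q := hQcover
  choose qOf hqOf using hqex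
  have huniq : ∀ k q, k ∈ Q q → qOf k = q := by
    intro k q h
    by_contra hne
    exact Finset.disjoint_left.mp (hQdisj _ _ hne) (hqOf k) h
  -- each column of t is nonzero
  have hcol : ∀ j, ∃ k, t j k ≠ 0 := by
    intro j
    by_contra h
    push_neg at h
    have h1 := hSS j j
    rw [Finset.sum_congr rfl (fun k _ => by rw [h k, mul_zero] :
      ∀ k ∈ Finset.univ, t j k * t j k = 0)] at h1
    simp at h1
  choose κ0 hκ0 using hcol
  set τ : Fin K → Fin Qn := fun j => qOf (κ0 j) with hτdef
  -- block structure
  have hblock : ∀ j k, t j k ≠ 0 → k ∈ Q (τ j) := by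
    intro j k h
    have hunid : Unidentifiable P (ψ k) (ψ (κ0 j)) := by
      intro m
      exact ⟨fun h1 => hsupp2 m j (κ0 j) (hκ0 j) (hsupp1 m j k h h1),
        fun h1 => hsupp2 m j k h (hsupp1 m j (κ0 j) (hκ0 j) h1)⟩
    by_contra hk
    have hne : qOf k ≠ τ j := fun he => hk (he ▸ hqOf k)
    exact hQdiff (qOf k) (τ j) hne k (hqOf k) (κ0 j) (hqOf (κ0 j)) hunid
  -- cardinality of fibers
  have hfibcard : ∀ q, Fintype.card {j : Fin K // τ j = q} ≤ (Q q).card := by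
    intro q
    have hli : LinearIndependent ℝ
        (fun j : {j : Fin K // τ j = q} => (fun k : ↥(Q q) => t (j : Fin K) (k : Fin K))) := by
      rw [Fintype.linearIndependent_iff]
      intro c hc
      have hallk : ∀ k : Fin K, ∑ j : {j : Fin K // τ j = q}, c j * t (j : Fin K) k = 0 := by
        intro k
        by_cases hk : k ∈ Q q
        · have := congrFun hc ⟨k, hk⟩
          simpa [Finset.sum_apply] using this
        · refine Finset.sum_eq_zero fun j _ => ?_
          have hz : t (j : Fin K) k = 0 := by
            by_contra hnz
            exact hk (j.2 ▸ hblock _ _ hnz)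
          rw [hz, mul_zero]
      intro j0
      have h0 : ∑ k : Fin K, (∑ j : {j : Fin K // τ j = q}, c j * t (j : Fin K) k)
          * t (j0 : Fin K) k = 0 :=
        Finset.sum_eq_zero fun k _ => by rw [hallk k, zero_mul]
      have h2 : ∑ j : {j : Fin K // τ j = q},
          c j * (∑ k : Fin K, t (j : Fin K) k * t (j0 : Fin K) k) = 0 := by
        rw [← h0]
        calc ∑ j : {j : Fin K // τ j = q}, c j * (∑ k, t (j : Fin K) k * t (j0 : Fin K) k)
            = ∑ j : {j : Fin K // τ j = q}, ∑ k, c j * (t (j : Fin K) k * t (j0 : Fin K) k) := by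
              exact Finset.sum_congr rfl fun j _ => Finset.mul_sum _ _ _
          _ = ∑ k, ∑ j : {j : Fin K // τ j = q}, c j * (t (j : Fin K) k * t (j0 : Fin K) k) :=
              Finset.sum_comm
          _ = ∑ k, (∑ j : {j : Fin K // τ j = q}, c j * t (j : Fin K) k) * t (j0 : Fin K) k := by
              refine Finset.sum_congr rfl fun k _ => ?_
              rw [Finset.sum_mul]
              exact Finset.sum_congr rfl fun j _ => by ring
      calc c j0 = ∑ j : {j : Fin K // τ j = q}, (if j = j0 then c j else 0) := by
            rw [Finset.sum_ite_eq' Finset.univ j0 c, if_pos (Finset.mem_univ j0)]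
        _ = ∑ j : {j : Fin K // τ j = q},
              c j * (if (j : Fin K) = (j0 : Fin K) then (1:ℝ) else 0) := by
            refine Finset.sum_congr rfl fun j _ => ?_
            by_cases hj : j = j0
            · subst hj; simp
            · have hcoe : (j : Fin K) ≠ (j0 : Fin K) := fun he => hj (Subtype.ext he)
              simp [hj, hcoe]
        _ = ∑ j : {j : Fin K // τ j = q},
              c j * (∑ k : Fin K, t (j : Fin K) k * t (j0 : Fin K) k) := by
            refine Finset.sum_congr rfl fun j _ => ?_
            rw [hSS (j : Fin K) (j0 : Fin K)]
        _ = 0 := h2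
    have hcard := hli.fintype_card_le_finrank
    rwa [Module.finrank_fintype_fun_eq_card, Fintype.card_coe] at hcard
  have hsum1 : ∑ q, (Finset.univ.filter fun j => τ j = q).card = K := by
    have h := Finset.card_eq_sum_card_fiberwise
      (f := τ) (s := Finset.univ) (t := Finset.univ) (fun x _ => Finset.mem_univ _)
    rw [← h, Finset.card_univ, Fintype.card_fin]
  have hsum2 : ∑ q, (Q q).card = K := by
    have h := Finset.card_eq_sum_card_fiberwise
      (f := qOf) (s := Finset.univ) (t := Finset.univ) (fun x _ => Finset.mem_univ _)
    have heq : ∀ q, Finset.univ.filter (fun k => qOf k = q) = Q q := by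
      intro q
      ext k
      simp only [Finset.mem_filter, Finset.mem_univ, true_and]
      exact ⟨fun h' => h' ▸ hqOf k, fun h' => huniq k q h'⟩
    rw [← Finset.sum_congr rfl fun q _ => congrArg Finset.card (heq q), ← h,
      Finset.card_univ, Fintype.card_fin]
  have hfibeq : ∀ q, Fintype.card {j : Fin K // τ j = q} = (Q q).card := by
    intro q
    by_contra hne
    have hlt : Fintype.card {j : Fin K // τ j = q} < (Q q).card :=
      lt_of_le_of_ne (hfibcard q) hne
    have hs : ∑ q', Fintype.card {j : Fin K // τ j = q'} = K :=
      (Finset.sum_congr rfl fun q' _ => Fintype.card_subtype _).trans hsum1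
    have := Finset.sum_lt_sum (fun q' (_ : q' ∈ Finset.univ) => hfibcard q')
      ⟨q, Finset.mem_univ q, hlt⟩
    rw [hs, hsum2] at this
    omega
  -- the bijections within groups
  have hee : ∀ q, Fintype.card ↥(Q q) = Fintype.card {j : Fin K // τ j = q} := by
    intro q
    rw [Fintype.card_coe, hfibeq q]
  let e : ∀ q, ↥(Q q) ≃ {j : Fin K // τ j = q} := fun q => Fintype.equivOfCardEq (hee q)
  let σfun : Fin K → Fin K := fun k => ((e (qOf k)) ⟨k, hqOf k⟩ : {j : Fin K // τ j = qOf k})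
  have hσ : ∀ (q : Fin Qn) (k : Fin K) (h : k ∈ Q q), σfun k = ((e q) ⟨k, h⟩ : Fin K) := by
    intro q k h
    have hq := huniq k q h
    subst hq
    rfl
  have hτσ : ∀ k, τ (σfun k) = qOf k := fun k => ((e (qOf k)) ⟨k, hqOf k⟩).2
  have hinj : Function.Injective σfun := by
    intro k1 k2 h
    have hq : qOf k1 = qOf k2 := by rw [← hτσ k1, ← hτσ k2, h]
    have h1 : σfun k1 = ((e (qOf k2)) ⟨k1, hq ▸ hqOf k1⟩ : Fin K) := hσ (qOf k2) k1 (hq ▸ hqOf k1)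
    have h2 : σfun k2 = ((e (qOf k2)) ⟨k2, hqOf k2⟩ : Fin K) := hσ (qOf k2) k2 (hqOf k2)
    rw [h1, h2] at h
    have := (e (qOf k2)).injective (Subtype.ext h)
    exact congrArg Subtype.val this
  have hsurj : Function.Surjective σfun := by
    intro j
    set q := τ j with hq
    let x : {j' : Fin K // τ j' = q} := ⟨j, rfl⟩
    let k := (e q).symm x
    refine ⟨(k : Fin K), ?_⟩
    rw [hσ q (k : Fin K) k.2]
    show (((e q) k : {j' : Fin K // τ j' = q}) : Fin K) = j
    rw [Equiv.apply_symm_apply]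
  let σ : Equiv.Perm (Fin K) := Equiv.ofBijective σfun ⟨hinj, hsurj⟩
  -- block zero structure relative to groups
  have hblockσ : ∀ (q : Fin Qn) (k : ↥(Q q)) (k' : Fin K),
      t (σfun (k : Fin K)) k' ≠ 0 → k' ∈ Q q := by
    intro q k k' h
    have h1 := hblock _ _ h
    rwa [hτσ, huniq (k : Fin K) q k.2] at h1
  -- the orthogonal matrices
  let U : ∀ q, Matrix ↥(Q q) ↥(Q q) ℝ := fun q =>
    Matrix.of fun k' k => t (σfun (k : Fin K)) (k' : Fin K)
  refine ⟨σ, U, fun q => ?_, fun q k i => ?_⟩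
  · have horth : (U q)ᵀ * U q = 1 := by
      ext k1 k2
      show (∑ c : ↥(Q q), t (σfun (k1 : Fin K)) (c : Fin K) * t (σfun (k2 : Fin K)) (c : Fin K))
        = (1 : Matrix ↥(Q q) ↥(Q q) ℝ) k1 k2
      have e1 : ∑ c : ↥(Q q), t (σfun (k1 : Fin K)) (c : Fin K) * t (σfun (k2 : Fin K)) (c : Fin K)
          = ∑ c ∈ Q q, t (σfun (k1 : Fin K)) c * t (σfun (k2 : Fin K)) c :=
        Finset.sum_coe_sort (Q q) (fun c => t (σfun (k1 : Fin K)) c * t (σfun (k2 : Fin K)) c)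
      have e2 : ∑ c ∈ Q q, t (σfun (k1 : Fin K)) c * t (σfun (k2 : Fin K)) c
          = ∑ c : Fin K, t (σfun (k1 : Fin K)) c * t (σfun (k2 : Fin K)) c := by
        apply Finset.sum_subset (Finset.subset_univ _)
        intro c _ hc
        have : t (σfun (k1 : Fin K)) c = 0 := by
          by_contra hnz
          exact hc (hblockσ q k1 c hnz)
        rw [this, zero_mul]
      rw [e1, e2, hSS]
      by_cases hk : k1 = k2
      · subst hk; simp [Matrix.one_apply]
      · have h1 : σfun (k1 : Fin K) ≠ σfun (k2 : Fin K) := fun h => hk (Subtype.ext (hinj h))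
        simp [Matrix.one_apply, hk, h1]
    exact ⟨horth, mul_eq_one_comm.mp horth⟩
  · show g (σfun (k : Fin K)) i = ∑ k' : ↥(Q q), ψ (k' : Fin K) i * t (σfun (k : Fin K)) (k' : Fin K)
    have e1 : ∑ k' : ↥(Q q), ψ (k' : Fin K) i * t (σfun (k : Fin K)) (k' : Fin K)
        = ∑ k' ∈ Q q, ψ k' i * t (σfun (k : Fin K)) k' :=
      Finset.sum_coe_sort (Q q) (fun k' => ψ k' i * t (σfun (k : Fin K)) k')
    have e2 : ∑ k' ∈ Q q, ψ k' i * t (σfun (k : Fin K)) k'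
        = ∑ k' : Fin K, ψ k' i * t (σfun (k : Fin K)) k' := by
      apply Finset.sum_subset (Finset.subset_univ _)
      intro k' _ hk'
      have : t (σfun (k : Fin K)) k' = 0 := by
        by_contra hnz
        exact hk' (hblockσ q k k' hnz)
      rw [this, mul_zero]
    rw [e1, e2, hgi]
    exact Finset.sum_congr rfl fun k' _ => by ring
end

section
/- Let 𝒫_c be a partition of {1,...,N} and let 𝒫_f be a refinement of 𝒫_c. If 𝒫_f is regular-sparse with respect to A, then 𝒫_c is also regular-sparse with respect to A. -/
open Matrix BigOperators

/-- Lemma B.1 of the paper. If `𝒫_f` is a refinement of `𝒫_c` and `𝒫_f`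
is regular-sparse with respect to `A`, then `𝒫_c` is also regular-sparse with respect
to `A`. -/
theorem regularSparse_of_refinement
    {N Mc Mf K : ℕ} (A : Matrix (Fin N) (Fin N) ℝ)
    (hA : A.PosSemidef) (hrank : A.rank = K)
    (Pc : Fin Mc → Finset (Fin N)) (hPc : IsPartition Pc)
    (Pf : Fin Mf → Finset (Fin N)) (hPf : IsPartition Pf)
    (hrefine : ∀ mf, ∃ mc, Pf mf ⊆ Pc mc)
    (hreg : RegularSparse K A Pf) :
    RegularSparse K A Pc := by
  classical
  obtain ⟨g, hg, hind⟩ := hreg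
  refine ⟨g, hg, fun mc => ?_⟩
  rw [Fintype.linearIndependent_iff]
  intro c hsum k₀
  -- coefficient function on all of Fin K
  let d : Fin K → ℝ := fun k => if h : restrictPatch (Pc mc) (g k) ≠ 0 then c ⟨k, h⟩ else 0
  -- key: the full sum vanishes on points of the coarse patch
  have key : ∀ j : Fin N, ∀ hj : j ∈ Pc mc, ∑ k : Fin K, d k * g k j = 0 := by
    intro j hj
    have h1 := congrFun hsum ⟨j, hj⟩
    simp only [Finset.sum_apply, Pi.smul_apply, smul_eq_mul, Pi.zero_apply] at h1
    have e1 : ∀ k : {k : Fin K // restrictPatch (Pc mc) (g k) ≠ 0},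
        c k * restrictPatch (Pc mc) (g k.1) ⟨j, hj⟩ = d k.1 * g k.1 j := by
      intro k
      show c k * g k.1 j = d k.1 * g k.1 j
      simp only [d]
      rw [dif_pos k.2]
    rw [Finset.sum_congr rfl (fun k _ => e1 k)] at h1
    have h2 : ∑ k : Fin K, d k * g k j
        = ∑ k : {k : Fin K // restrictPatch (Pc mc) (g k) ≠ 0}, d k.1 * g k.1 j := by
      rw [← Finset.sum_subtype (Finset.univ.filter
            (fun k => restrictPatch (Pc mc) (g k) ≠ 0))
        (by intro x; simp) (fun k : Fin K => d k * g k j)]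
      rw [Finset.sum_filter]
      refine Finset.sum_congr rfl (fun k _ => ?_)
      by_cases h : restrictPatch (Pc mc) (g k) ≠ 0
      · rw [if_pos h]
      · rw [if_neg h]
        have hd0 : d k = 0 := dif_neg h
        rw [hd0, zero_mul]
    rw [h2, h1]
  -- find the fine patch containing a point where g k₀ is nonzero
  obtain ⟨i, hi⟩ := Function.ne_iff.mp k₀.2
  obtain ⟨mf, hmf⟩ := hPf.2.2 i
  obtain ⟨mc', hsub'⟩ := hrefine mf
  have hmceq : mc' = mc := by
    by_contra h
    exact Finset.disjoint_left.mp (hPc.2.1 mc' mc h) (hsub' hmf) i.2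
  rw [hmceq] at hsub'
  have hFC : ∀ k : Fin K, restrictPatch (Pf mf) (g k) ≠ 0
      → restrictPatch (Pc mc) (g k) ≠ 0 := by
    intro k hk
    obtain ⟨j, hj⟩ := Function.ne_iff.mp hk
    exact Function.ne_iff.mpr ⟨⟨j, hsub' j.2⟩, hj⟩
  have hfine := Fintype.linearIndependent_iff.mp (hind mf)
  let c' : {k : Fin K // restrictPatch (Pf mf) (g k) ≠ 0} → ℝ :=
    fun k => c ⟨k.1, hFC k.1 k.2⟩
  have hsum' : ∑ k, c' k • restrictPatch (Pf mf) (g k.1) = 0 := by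
    funext j
    have hj : (j : Fin N) ∈ Pc mc := hsub' j.2
    simp only [Finset.sum_apply, Pi.smul_apply, smul_eq_mul, Pi.zero_apply]
    let d' : Fin K → ℝ :=
      fun k => if h : restrictPatch (Pf mf) (g k) ≠ 0 then c' ⟨k, h⟩ else 0
    have e1 : ∀ k : {k : Fin K // restrictPatch (Pf mf) (g k) ≠ 0},
        c' k * restrictPatch (Pf mf) (g k.1) j = d' k.1 * g k.1 (j : Fin N) := by
      intro k
      show c' k * g k.1 (j : Fin N) = d' k.1 * g k.1 (j : Fin N)
      simp only [d']
      rw [dif_pos k.2]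
    rw [Finset.sum_congr rfl (fun k _ => e1 k)]
    have h2 : ∑ k : Fin K, d' k * g k (j : Fin N)
        = ∑ k : {k : Fin K // restrictPatch (Pf mf) (g k) ≠ 0},
            d' k.1 * g k.1 (j : Fin N) := by
      rw [← Finset.sum_subtype (Finset.univ.filter
            (fun k => restrictPatch (Pf mf) (g k) ≠ 0))
        (by intro x; simp) (fun k : Fin K => d' k * g k (j : Fin N))]
      rw [Finset.sum_filter]
      refine Finset.sum_congr rfl (fun k _ => ?_)
      by_cases h : restrictPatch (Pf mf) (g k) ≠ 0
      · rw [if_pos h]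
      · rw [if_neg h]
        have hd0 : d' k = 0 := dif_neg h
        rw [hd0, zero_mul]
    rw [← h2, ← key j hj]
    refine Finset.sum_congr rfl (fun k _ => ?_)
    by_cases h : restrictPatch (Pf mf) (g k) ≠ 0
    · have hL : d' k = c ⟨k, hFC k h⟩ := dif_pos h
      have hR : d k = c ⟨k, hFC k h⟩ := dif_pos (hFC k h)
      rw [hL, hR]
    · have hz : g k (j : Fin N) = 0 := by
        by_contra hne
        exact h (Function.ne_iff.mpr ⟨j, hne⟩)
      rw [hz, mul_zero, mul_zero]
  have hk : restrictPatch (Pf mf) (g k₀.1) ≠ 0 :=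
    Function.ne_iff.mpr ⟨⟨i, hmf⟩, by simpa [restrictPatch] using hi⟩
  exact hfine c' hsum' ⟨k₀.1, hk⟩
end

section
/- Let M_1,...,M_K be n×n real symmetric matrices of the form M_k = D Λ_k Dᵀ, where D ∈ O(n) and each Λ_k = diag(λ_1(k),...,λ_n(k)) is diagonal. For i ∈ {1,...,n} let λ_i = (λ_i(1),...,λ_i(K)) ∈ ℝ^K, and suppose that there are exactly m distinct vectors among λ_1,...,λ_n, occurring with multiplicities q_1,...,q_m, and that equal vectors occupy consecutive indices. If V ∈ O(n) is a global minimizer of the joint diagonalization objective V ↦ Σ_{k=1}^K Σ_{i≠j} |(Vᵀ M_k V)_{i,j}|² over O(n), then there exist a permutation matrix Π ∈ ℝ^{n×n} and a block-diagonal matrix R = diag(R_1,...,R_m) with R_i ∈ O(q_i) for each i, such that V Π = D R. -/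
open Matrix BigOperators

/-- An orthonormal (w.r.t. the dot product) family in `α → ℝ` is linearly independent. -/
lemma aux_orthonormal_li {ι α : Type*} [Fintype ι] [DecidableEq ι] [Fintype α]
    (v : ι → α → ℝ) (h : ∀ c c', ∑ i, v c i * v c' i = if c = c' then 1 else 0) :
    LinearIndependent ℝ v := by
  rw [Fintype.linearIndependent_iff]
  intro g hg c
  have h2 : ∑ a, (∑ i, g i • v i) a * v c a = 0 := by
    rw [hg]; simp
  calc g c = ∑ i, g i * (if i = c then 1 else 0) := by simp
    _ = ∑ i, g i * ∑ a, v i a * v c a := by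
        refine Finset.sum_congr rfl fun i _ => ?_; rw [h i c]
    _ = ∑ a, (∑ i, g i * v i a) * v c a := by
        simp_rw [Finset.mul_sum, Finset.sum_mul, mul_assoc]
        rw [Finset.sum_comm]
    _ = ∑ a, (∑ i, g i • v i) a * v c a := by
        simp [Finset.sum_apply]
    _ = 0 := h2

/-- Theorem C.1 of the paper. Let `M_k = D Λ_k Dᵀ` with `D ∈ O(n)` and
`Λ_k = diag(λ_1(k),...,λ_n(k))`. Suppose the eigenvalue vectors `λ_i ∈ ℝ^K` take exactly `m`
distinct values with multiplicities `q_1,...,q_m`, with equal vectors occupying consecutive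
indices (encoded by the monotone block map `b : Fin n → Fin m`). If `V ∈ O(n)` is a global
minimizer of the joint diagonalization objective, then there exist a permutation matrix `Π`
and a block-diagonal matrix `R = diag(R_1,...,R_m)` with `R_i ∈ O(q_i)` such that
`V Π = D R`. -/
theorem joint_diagonalizer_unique_up_to_block_rotation
    {n K m : ℕ}
    (lam : Fin n → Fin K → ℝ)
    (q : Fin m → ℕ) (hq : ∀ t, 0 < q t)
    (b : Fin n → Fin m) (hb : Monotone b)
    (hcard : ∀ t : Fin m, (Finset.univ.filter fun i => b i = t).card = q t)
    (hsep : ∀ i j : Fin n, lam i = lam j ↔ b i = b j)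
    (D : Matrix (Fin n) (Fin n) ℝ) (hD : Dᵀ * D = 1 ∧ D * Dᵀ = 1)
    (Mk : Fin K → Matrix (Fin n) (Fin n) ℝ)
    (hMk : ∀ k, Mk k = D * Matrix.diagonal (fun i => lam i k) * Dᵀ)
    (V : Matrix (Fin n) (Fin n) ℝ) (hV : Vᵀ * V = 1 ∧ V * Vᵀ = 1)
    (hmin : ∀ W : Matrix (Fin n) (Fin n) ℝ, Wᵀ * W = 1 → W * Wᵀ = 1 →
      offDiagObj Mk V ≤ offDiagObj Mk W) :
    ∃ (σ : Equiv.Perm (Fin n)) (R : Matrix (Fin n) (Fin n) ℝ),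
      (∀ i j, b i ≠ b j → R i j = 0) ∧
      Rᵀ * R = 1 ∧ R * Rᵀ = 1 ∧
      V * (Matrix.of fun i j => if σ i = j then (1 : ℝ) else 0) = D * R := by
  classical
  obtain ⟨hD1, hD2⟩ := hD
  obtain ⟨hV1, hV2⟩ := hV
  set U : Matrix (Fin n) (Fin n) ℝ := Dᵀ * V with hUdef
  -- conjugating by D diagonalizes each Mk
  have key : ∀ p, Dᵀ * Mk p * D = Matrix.diagonal (fun i => lam i p) := by
    intro p
    rw [hMk p]
    have : Dᵀ * (D * Matrix.diagonal (fun i => lam i p) * Dᵀ) * D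
        = Dᵀ * D * (Matrix.diagonal (fun i => lam i p) * (Dᵀ * D)) := by
      simp only [Matrix.mul_assoc]
    rw [this, hD1]
    simp
  -- the objective at D is zero
  have hobjD : offDiagObj Mk D = 0 := by
    unfold offDiagObj
    refine Finset.sum_eq_zero fun p _ => ?_
    refine Finset.sum_eq_zero fun i _ => ?_
    refine Finset.sum_eq_zero fun j _ => ?_
    rw [key p]
    by_cases h : i = j
    · simp [h]
    · simp [h, Matrix.diagonal_apply_ne _ h]
  -- hence the objective at V is zero
  have hobjV : offDiagObj Mk V = 0 := by
    have h1 := hmin D hD1 hD2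
    rw [hobjD] at h1
    have h2 : 0 ≤ offDiagObj Mk V := by
      unfold offDiagObj
      refine Finset.sum_nonneg fun p _ => ?_
      refine Finset.sum_nonneg fun i _ => ?_
      refine Finset.sum_nonneg fun j _ => ?_
      by_cases h : i = j <;> simp [h] <;> positivity
    linarith
  -- so all off-diagonal entries of Vᵀ Mk V vanish
  have hdiag : ∀ p (i j : Fin n), i ≠ j → (Vᵀ * Mk p * V) i j = 0 := by
    intro p i j hij
    by_contra hne
    have hpos : 0 < ((Vᵀ * Mk p * V) i j) ^ 2 := by positivity
    have hterm : ∀ p, 0 ≤ ∑ i, ∑ j, if i ≠ j then ((Vᵀ * Mk p * V) i j) ^ 2 else 0 := by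
      intro p
      refine Finset.sum_nonneg fun i _ => Finset.sum_nonneg fun j _ => ?_
      by_cases h : i = j <;> simp [h] <;> positivity
    have h1 : (∑ i, ∑ j, if i ≠ j then ((Vᵀ * Mk p * V) i j) ^ 2 else 0) = 0 := by
      have := (Finset.sum_eq_zero_iff_of_nonneg (fun p _ => hterm p)).mp hobjV p
        (Finset.mem_univ p)
      exact this
    have h2 : (∑ j, if i ≠ j then ((Vᵀ * Mk p * V) i j) ^ 2 else 0) = 0 := by
      have hnn : ∀ i' ∈ Finset.univ,
          0 ≤ ∑ j, if i' ≠ j then ((Vᵀ * Mk p * V) i' j) ^ 2 else 0 := by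
        intro i' _
        refine Finset.sum_nonneg fun j _ => ?_
        by_cases h : i' = j <;> simp [h] <;> positivity
      exact (Finset.sum_eq_zero_iff_of_nonneg hnn).mp h1 i (Finset.mem_univ i)
    have h3 : (if i ≠ j then ((Vᵀ * Mk p * V) i j) ^ 2 else 0) = 0 := by
      have hnn : ∀ j' ∈ Finset.univ,
          0 ≤ if i ≠ j' then ((Vᵀ * Mk p * V) i j') ^ 2 else 0 := by
        intro j' _
        by_cases h : i = j' <;> simp [h] <;> positivity
      exact (Finset.sum_eq_zero_iff_of_nonneg hnn).mp h2 j (Finset.mem_univ j)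
    rw [if_pos hij] at h3
    exact absurd h3 (ne_of_gt hpos)
  set μ : Fin n → Fin K → ℝ := fun j p => (Vᵀ * Mk p * V) j j with hμdef
  have hNk : ∀ p, Vᵀ * Mk p * V = Matrix.diagonal (fun j => μ j p) := by
    intro p
    ext i j
    by_cases h : i = j
    · subst h; simp [Matrix.diagonal_apply_eq, hμdef]
    · rw [hdiag p i j h, Matrix.diagonal_apply_ne _ h]
  -- the entrywise eigen-relation
  have hrel : ∀ p (i j : Fin n), lam i p * U i j = U i j * μ j p := by
    intro p i j
    have h1 : Matrix.diagonal (fun i => lam i p) * U = U * Matrix.diagonal (fun j => μ j p) := by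
      rw [← key p, ← hNk p, hUdef]
      calc Dᵀ * Mk p * D * (Dᵀ * V) = Dᵀ * (Mk p * ((D * Dᵀ) * V)) := by
            simp only [Matrix.mul_assoc]
        _ = Dᵀ * (Mk p * V) := by rw [hD2]; simp
        _ = Dᵀ * ((V * Vᵀ) * (Mk p * V)) := by rw [hV2]; simp
        _ = Dᵀ * V * (Vᵀ * Mk p * V) := by simp only [Matrix.mul_assoc]
    have h2 := congrFun (congrFun h1 i) j
    rwa [Matrix.diagonal_mul, Matrix.mul_diagonal] at h2
  have hUU : Uᵀ * U = 1 := by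
    rw [hUdef, Matrix.transpose_mul, Matrix.transpose_transpose]
    calc Vᵀ * D * (Dᵀ * V) = Vᵀ * ((D * Dᵀ) * V) := by simp only [Matrix.mul_assoc]
      _ = 1 := by rw [hD2]; simpa using hV1
  have hUUt : U * Uᵀ = 1 := by
    rw [hUdef, Matrix.transpose_mul, Matrix.transpose_transpose]
    calc Dᵀ * V * (Vᵀ * D) = Dᵀ * ((V * Vᵀ) * D) := by simp only [Matrix.mul_assoc]
      _ = 1 := by rw [hV2]; simpa using hD1
  -- every column of U is nonzero
  have hcolnz : ∀ j, ∃ i, U i j ≠ 0 := by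
    intro j
    by_contra h
    push_neg at h
    have h1 := congrFun (congrFun hUU j) j
    rw [Matrix.mul_apply] at h1
    simp only [Matrix.transpose_apply, h, mul_zero, Finset.sum_const_zero,
      Matrix.one_apply_eq] at h1
    exact zero_ne_one h1
  have hsupp : ∀ i j, U i j ≠ 0 → lam i = μ j := by
    intro i j h
    funext p
    have h1 := hrel p i j
    have h2 : U i j * lam i p = U i j * μ j p := by linarith [h1, mul_comm (lam i p) (U i j)]
    exact mul_left_cancel₀ h h2
  -- the block of each column
  set t : Fin n → Fin m := fun j => b (Classical.choose (hcolnz j)) with htdef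
  have ht : ∀ i j, U i j ≠ 0 → b i = t j := by
    intro i j h
    have h1 := hsupp i j h
    have h2 := hsupp _ j (Classical.choose_spec (hcolnz j))
    exact (hsep i _).mp (h1.trans h2.symm)
  -- fiberwise cardinality bound
  have hle : ∀ s : Fin m, (Finset.univ.filter fun c => t c = s).card ≤ q s := by
    intro s
    set v : {c : Fin n // t c = s} → ({i : Fin n // b i = s} → ℝ) :=
      fun c i => U (i : Fin n) (c : Fin n) with hvdef
    have horth : ∀ c c' : {c : Fin n // t c = s},
        ∑ i, v c i * v c' i = if c = c' then 1 else 0 := by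
      intro c c'
      have e1 : ∑ i : {i : Fin n // b i = s}, U (i : Fin n) (c : Fin n) * U (i : Fin n) (c' : Fin n)
          = ∑ i ∈ Finset.univ.filter (fun i => b i = s),
              U i (c : Fin n) * U i (c' : Fin n) :=
        (Finset.sum_subtype (Finset.univ.filter fun i => b i = s)
          (fun x => by simp) (fun i => U i (c : Fin n) * U i (c' : Fin n))).symm
      have e2 : ∑ i ∈ Finset.univ.filter (fun i => b i = s),
            U i (c : Fin n) * U i (c' : Fin n)
          = ∑ i : Fin n, U i (c : Fin n) * U i (c' : Fin n) := by
        refine Finset.sum_filter_of_ne fun i _ hne => ?_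
        have hUc : U i (c : Fin n) ≠ 0 := left_ne_zero_of_mul hne
        have := ht i (c : Fin n) hUc
        rw [this]
        exact c.2
      have h1 := congrFun (congrFun hUU (c : Fin n)) (c' : Fin n)
      rw [Matrix.mul_apply] at h1
      simp only [Matrix.transpose_apply] at h1
      simp only [hvdef]
      rw [e1, e2, h1, Matrix.one_apply]
      by_cases hcc : (c : Fin n) = (c' : Fin n)
      · have : c = c' := Subtype.ext hcc
        simp [this, hcc]
      · have : c ≠ c' := fun h => hcc (by rw [h])
        simp [this, hcc]
    have hli : LinearIndependent ℝ v := aux_orthonormal_li v horth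
    have hcardle := hli.fintype_card_le_finrank
    rw [Module.finrank_fintype_fun_eq_card, Fintype.card_subtype, Fintype.card_subtype] at hcardle
    rw [← hcard s]
    exact hcardle
  -- the fibers of t and b have equal cardinalities
  have hsum_t : ∑ s, (Finset.univ.filter fun c => t c = s).card = n := by
    have := Finset.card_eq_sum_card_fiberwise
      (f := t) (s := Finset.univ) (t := Finset.univ) (fun x _ => Finset.mem_univ (t x))
    simpa using this.symm
  have hsum_b : ∑ s, q s = n := by
    have := Finset.card_eq_sum_card_fiberwise
      (f := b) (s := Finset.univ) (t := Finset.univ) (fun x _ => Finset.mem_univ (b x))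
    simp only [hcard] at this
    simpa using this.symm
  have heq : ∀ s : Fin m, (Finset.univ.filter fun c => t c = s).card = q s := by
    have hsums : ∑ s, (Finset.univ.filter fun c => t c = s).card = ∑ s, q s := by
      rw [hsum_t, hsum_b]
    intro s
    exact (Finset.sum_eq_sum_iff_of_le (fun s _ => hle s)).mp hsums s (Finset.mem_univ s)
  -- build the permutation
  have hcards : ∀ s : Fin m, Fintype.card {c : Fin n // t c = s} = Fintype.card {j : Fin n // b j = s} := by
    intro s
    rw [Fintype.card_subtype, Fintype.card_subtype, heq s, hcard s]
  set e : ∀ s : Fin m, {c : Fin n // t c = s} ≃ {j : Fin n // b j = s} :=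
    fun s => Fintype.equivOfCardEq (hcards s) with hedef
  set σ : Equiv.Perm (Fin n) :=
    (Equiv.sigmaFiberEquiv t).symm.trans ((Equiv.sigmaCongrRight e).trans (Equiv.sigmaFiberEquiv b))
    with hσdef
  have hσ : ∀ c, b (σ c) = t c := by
    intro c
    exact (e (t c) ⟨c, rfl⟩).2
  -- the permutation matrix
  set Pm : Matrix (Fin n) (Fin n) ℝ := Matrix.of fun i j => if σ i = j then (1 : ℝ) else 0
    with hPmdef
  have hPm1 : Pmᵀ * Pm = 1 := by
    ext i j
    rw [Matrix.mul_apply]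
    simp only [Matrix.transpose_apply, hPmdef, Matrix.of_apply]
    rw [Fintype.sum_equiv σ
      (fun k => (if σ k = i then (1:ℝ) else 0) * (if σ k = j then 1 else 0))
      (fun k => (if k = i then (1:ℝ) else 0) * (if k = j then 1 else 0))
      (fun k => rfl)]
    rcases eq_or_ne i j with h | h
    · simp [h, Matrix.one_apply, ite_and, Finset.sum_ite_eq]
    · simp [Matrix.one_apply, ite_and, Finset.sum_ite_eq, h, h.symm]
  have hPm2 : Pm * Pmᵀ = 1 := by
    ext i j
    rw [Matrix.mul_apply]
    simp only [Matrix.transpose_apply, hPmdef, Matrix.of_apply]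
    simp [Matrix.one_apply, ite_and, Finset.sum_ite_eq, σ.injective.eq_iff]
  refine ⟨σ, U * Pm, ?_, ?_, ?_, ?_⟩
  · intro i j hbij
    have hent : (U * Pm) i j = U i (σ.symm j) := by
      rw [Matrix.mul_apply]
      simp only [hPmdef, Matrix.of_apply]
      have hcond : ∀ k, (σ k = j) = (k = σ.symm j) := by
        intro k
        simp [Equiv.apply_eq_iff_eq_symm_apply]
      simp only [hcond, mul_ite, mul_one, mul_zero]
      simp [Finset.sum_ite_eq']
    rw [hent]
    by_contra hne
    have := ht _ _ hne
    rw [← hσ (σ.symm j), Equiv.apply_symm_apply] at this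
    exact hbij this
  · rw [Matrix.transpose_mul, Matrix.mul_assoc, ← Matrix.mul_assoc Uᵀ U Pm, hUU,
      Matrix.one_mul, hPm1]
  · rw [Matrix.transpose_mul, Matrix.mul_assoc U Pm, ← Matrix.mul_assoc Pm Pmᵀ Uᵀ, hPm2,
      Matrix.one_mul, hUUt]
  · rw [← hPmdef, hUdef, ← Matrix.mul_assoc D (Dᵀ * V) Pm, ← Matrix.mul_assoc D Dᵀ V, hD2,
      Matrix.one_mul]
end
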